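/- arXiv:2211.06920 — 4 statements merged into one kernel-verified Lean document; each statement's English description precedes it below -/
import Mathlib

section
/- Let G=(V,E,w) be an n-vertex (possibly directed) weighted graph, let ε ≥ 0, let ℓ ≥ 1 be an integer, and let n = β_0 ≥ β_1 ≥ ⋯ ≥ β_ℓ ≥ 1 be integers. Suppose that for every i ∈ {1,…,ℓ}, H_i is a (β_i,ε)-hopset for G. Then there exists a subgraph G' ⊆ G with at most Σ_{i=1}^{ℓ} |H_i|·β_{i−1} edges which is a β_ℓ-missing (1+ε)^ℓ-spanner for G. -/
open scoped ENNReal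

namespace Hopsets

/-- A weighted directed graph on vertex type `V`: a finite edge set together
with a weight function. -/
structure WDigraph (V : Type) where
  edges : Finset (V × V)
  w : V × V → ℝ

variable {V : Type}

/-- All edge weights are nonnegative. -/
def WDigraph.Nonneg (G : WDigraph V) : Prop := ∀ e, 0 ≤ G.w e

/-- Edge weights are polynomially bounded (degree `q`) in the number of vertices. -/
def WDigraph.PolyBounded [Fintype V] (G : WDigraph V) (q : ℕ) : Prop :=
  ∀ e ∈ G.edges, G.w e ≤ (Fintype.card V : ℝ) ^ q

/-- `G` encodes an undirected graph: edges come in symmetric pairs of equal weight. -/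
def WDigraph.Symmetric (G : WDigraph V) : Prop :=
  ∀ e ∈ G.edges, (e.2, e.1) ∈ G.edges ∧ G.w (e.2, e.1) = G.w e

/-- `G` is unweighted: every edge has weight `1`. -/
def WDigraph.Unweighted (G : WDigraph V) : Prop := ∀ e, G.w e = 1

/-- `IsWalkFrom G u v l` : the list of edges `l` forms a walk from `u` to `v` in `G`. -/
def IsWalkFrom (G : WDigraph V) : V → V → List (V × V) → Prop
  | u, v, [] => u = v
  | u, v, e :: l => e ∈ G.edges ∧ e.1 = u ∧ IsWalkFrom G e.2 v l

/-- The total weight of a walk, as an extended nonnegative real. -/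
noncomputable def walkWeight (G : WDigraph V) (l : List (V × V)) : ℝ≥0∞ :=
  ENNReal.ofReal ((l.map G.w).sum)

/-- `β`-hop-bounded distance: the infimum weight of a `u`-`v` walk with at most `β` edges. -/
noncomputable def WDigraph.hopDist (G : WDigraph V) (β : ℕ) (u v : V) : ℝ≥0∞ :=
  ⨅ l ∈ {l : List (V × V) | IsWalkFrom G u v l ∧ l.length ≤ β}, walkWeight G l

/-- Distance: infimum weight of a `u`-`v` walk (`∞` if there is none). -/
noncomputable def WDigraph.dist (G : WDigraph V) (u v : V) : ℝ≥0∞ :=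
  ⨅ l ∈ {l : List (V × V) | IsWalkFrom G u v l}, walkWeight G l

/-- `v` is reachable from `u` in `G`. -/
def WDigraph.Reachable (G : WDigraph V) (u v : V) : Prop :=
  ∃ l, IsWalkFrom G u v l

/-- The graph `G ∪ H` obtained by adding the edge set `H`, each added edge `(x,y)`
weighted by `dist_G(x,y)`. -/
noncomputable def WDigraph.augment [DecidableEq V] (G : WDigraph V) (H : Finset (V × V)) :
    WDigraph V where
  edges := G.edges ∪ H
  w := fun e => if e ∈ H then (G.dist e.1 e.2).toReal else G.w e

/-- `H` is a `(β,ε)`-hopset for `G`: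
`dist_G(u,v) ≤ dist^{(β)}_{G∪H}(u,v) ≤ (1+ε)·dist_G(u,v)` for all `u, v`. -/
def IsHopset [DecidableEq V] (G : WDigraph V) (β : ℕ) (ε : ℝ) (H : Finset (V × V)) : Prop :=
  ∀ u v, G.dist u v ≤ (G.augment H).hopDist β u v ∧
    (G.augment H).hopDist β u v ≤ ENNReal.ofReal (1 + ε) * G.dist u v

/-- The subgraph of `G` with edge set `E'` (same weights). -/
def WDigraph.sub (G : WDigraph V) (E' : Finset (V × V)) : WDigraph V :=
  ⟨E', G.w⟩

/-- `E'` (a subgraph of `G`) is an `r`-missing `t`-spanner: for every reachable pair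
`(u,v)` there is a `u`-`v` walk in `G` of weight at most `t·dist_G(u,v)` with at most
`r` edges outside `E'`. -/
def IsMissingSpanner [DecidableEq V] (G : WDigraph V) (E' : Finset (V × V))
    (r : ℕ) (t : ℝ) : Prop :=
  ∀ u v, G.Reachable u v → ∃ l, IsWalkFrom G u v l ∧
    walkWeight G l ≤ ENNReal.ofReal t * G.dist u v ∧
    (l.filter (fun e => decide (e ∉ E'))).length ≤ r

end Hopsets

namespace Hopsets

variable {V : Type}

lemma mem_edges_of_walk {G : WDigraph V} :
    ∀ {l : List (V × V)} {u v : V}, IsWalkFrom G u v l → ∀ e ∈ l, e ∈ G.edges := by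
  intro l
  induction l with
  | nil => intro u v _ e he; simp at he
  | cons a t ih =>
    intro u v hw e he
    obtain ⟨ha, _, hwt⟩ := hw
    rcases List.mem_cons.mp he with h | h
    · exact h ▸ ha
    · exact ih hwt e h

lemma isWalkFrom_append {G : WDigraph V} :
    ∀ {l₁ l₂ : List (V × V)} {u m v : V},
      IsWalkFrom G u m l₁ → IsWalkFrom G m v l₂ → IsWalkFrom G u v (l₁ ++ l₂) := by
  intro l₁
  induction l₁ with
  | nil =>
    intro l₂ u m v h1 h2
    have hum : u = m := h1
    subst hum
    simpa using h2
  | cons a t ih =>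
    intro l₂ u m v h1 h2
    obtain ⟨ha, hau, hwt⟩ := h1
    exact ⟨ha, hau, ih hwt h2⟩

lemma isWalkFrom_split {G : WDigraph V} :
    ∀ {l₁ l₂ : List (V × V)} {u v : V},
      IsWalkFrom G u v (l₁ ++ l₂) → ∃ m, IsWalkFrom G u m l₁ ∧ IsWalkFrom G m v l₂ := by
  intro l₁
  induction l₁ with
  | nil =>
    intro l₂ u v h
    exact ⟨u, rfl, by simpa using h⟩
  | cons a t ih =>
    intro l₂ u v h
    obtain ⟨ha, hau, hw⟩ := h
    obtain ⟨m, h1, h2⟩ := ih hw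
    exact ⟨m, ⟨ha, hau, h1⟩, h2⟩

lemma walkWeight_eq_sum {G : WDigraph V} (hG : G.Nonneg) :
    ∀ l : List (V × V), walkWeight G l = (l.map (fun e => ENNReal.ofReal (G.w e))).sum := by
  intro l
  induction l with
  | nil => simp [walkWeight]
  | cons a t ih =>
    have ht : 0 ≤ (t.map G.w).sum := List.sum_nonneg (by
      intro x hx
      obtain ⟨e, _, rfl⟩ := List.mem_map.mp hx
      exact hG e)
    have h1 : walkWeight G (a :: t) =
        ENNReal.ofReal (G.w a) + ENNReal.ofReal ((t.map G.w).sum) := by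
      rw [walkWeight, List.map_cons, List.sum_cons, ENNReal.ofReal_add (hG a) ht]
    rw [h1, List.map_cons, List.sum_cons]
    exact congrArg (ENNReal.ofReal (G.w a) + ·) ih

lemma walkWeight_nil {G : WDigraph V} : walkWeight G [] = 0 := by simp [walkWeight]

lemma walkWeight_cons {G : WDigraph V} (hG : G.Nonneg) (a : V × V) (t : List (V × V)) :
    walkWeight G (a :: t) = ENNReal.ofReal (G.w a) + walkWeight G t := by
  rw [walkWeight_eq_sum hG, walkWeight_eq_sum hG]
  simp

lemma walkWeight_append {G : WDigraph V} (hG : G.Nonneg) (l₁ l₂ : List (V × V)) :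
    walkWeight G (l₁ ++ l₂) = walkWeight G l₁ + walkWeight G l₂ := by
  rw [walkWeight_eq_sum hG, walkWeight_eq_sum hG, walkWeight_eq_sum hG]
  simp

lemma walkWeight_ne_top {G : WDigraph V} {l : List (V × V)} : walkWeight G l ≠ ⊤ :=
  ENNReal.ofReal_ne_top

lemma dist_le_walkWeight {G : WDigraph V} {u v : V} {l : List (V × V)}
    (h : IsWalkFrom G u v l) : G.dist u v ≤ walkWeight G l :=
  iInf₂_le l h

lemma hopDist_le_walkWeight {G : WDigraph V} {β : ℕ} {u v : V} {l : List (V × V)}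
    (h : IsWalkFrom G u v l) (hl : l.length ≤ β) :
    G.hopDist β u v ≤ walkWeight G l :=
  iInf₂_le l ⟨h, hl⟩

lemma hopDist_attained [Fintype V] {G : WDigraph V} {β : ℕ} {u v : V}
    (h : G.hopDist β u v ≠ ⊤) :
    ∃ l, IsWalkFrom G u v l ∧ l.length ≤ β ∧ walkWeight G l = G.hopDist β u v := by
  classical
  have hrw : G.hopDist β u v =
      sInf (walkWeight G '' {l : List (V × V) | IsWalkFrom G u v l ∧ l.length ≤ β}) :=
    (sInf_image).symm
  have hfin : (walkWeight G '' {l : List (V × V) | IsWalkFrom G u v l ∧ l.length ≤ β}).Finite :=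
    (Set.Finite.subset (List.finite_length_le (α := V × V) β) (fun l hl => hl.2)).image _
  have hne : (walkWeight G '' {l : List (V × V) | IsWalkFrom G u v l ∧ l.length ≤ β}).Nonempty := by
    rcases Set.eq_empty_or_nonempty
        (walkWeight G '' {l : List (V × V) | IsWalkFrom G u v l ∧ l.length ≤ β}) with he | hne
    · rw [he, sInf_empty] at hrw
      exact absurd hrw h
    · exact hne
  have hmem := hne.csInf_mem hfin
  obtain ⟨l, hl, hval⟩ := hmem
  exact ⟨l, hl.1, hl.2, by rw [hval, hrw]⟩

lemma walk_shorten_step {G : WDigraph V} (hG : G.Nonneg) :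
    ∀ (l : List (V × V)) (u v : V), IsWalkFrom G u v l → ¬ (u :: l.map Prod.snd).Nodup →
      ∃ l', IsWalkFrom G u v l' ∧ l'.length < l.length ∧ walkWeight G l' ≤ walkWeight G l := by
  intro l
  induction l with
  | nil =>
    intro u v _ hnd
    exact absurd (List.nodup_singleton u) (by simpa using hnd)
  | cons e t ih =>
    intro u v hw hnd
    obtain ⟨he, heu, hwt⟩ := hw
    by_cases hu : u ∈ (e :: t).map Prod.snd
    · obtain ⟨f, hf, hfu⟩ := List.mem_map.mp hu
      obtain ⟨s, r, hsr⟩ := List.append_of_mem hf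
      have hw0 : IsWalkFrom G u v ((s ++ [f]) ++ r) := by
        rw [List.append_assoc]
        have : IsWalkFrom G u v (e :: t) := ⟨he, heu, hwt⟩
        simpa [← hsr] using this
      obtain ⟨m, h1, h2⟩ := isWalkFrom_split hw0
      obtain ⟨m', hm1, hm2⟩ := isWalkFrom_split h1
      have hfm : f.2 = m := hm2.2.2
      have hmu : m = u := by rw [← hfm, hfu]
      refine ⟨r, hmu ▸ h2, ?_, ?_⟩
      · rw [hsr]
        simp only [List.length_append, List.length_cons]
        omega
      · rw [hsr, walkWeight_append hG s (f :: r), walkWeight_cons hG f r]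
        exact le_add_left (le_add_left le_rfl)
    · have hnd' : ¬ (e.2 :: t.map Prod.snd).Nodup := by
        intro hh
        refine hnd ?_
        rw [List.map_cons]
        exact List.nodup_cons.mpr ⟨by simpa using hu, hh⟩
      obtain ⟨t', h1, h2, h3⟩ := ih e.2 v hwt hnd'
      refine ⟨e :: t', ⟨he, heu, h1⟩, by simpa using Nat.succ_lt_succ h2, ?_⟩
      rw [walkWeight_cons hG, walkWeight_cons hG]
      exact add_le_add_right h3 _

lemma walk_shorten [Fintype V] {G : WDigraph V} (hG : G.Nonneg) :
    ∀ (l : List (V × V)) (u v : V), IsWalkFrom G u v l →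
      ∃ l', IsWalkFrom G u v l' ∧ l'.length ≤ Fintype.card V ∧
        walkWeight G l' ≤ walkWeight G l := by
  suffices h : ∀ (N : ℕ) (l : List (V × V)), l.length ≤ N → ∀ u v, IsWalkFrom G u v l →
      ∃ l', IsWalkFrom G u v l' ∧ l'.length ≤ Fintype.card V ∧
        walkWeight G l' ≤ walkWeight G l by
    exact fun l u v hw => h l.length l le_rfl u v hw
  intro N
  induction N with
  | zero =>
    intro l hl u v hw
    exact ⟨l, hw, le_trans hl (Nat.zero_le _), le_rfl⟩
  | succ N ihN =>
    intro l hl u v hw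
    by_cases hnd : (u :: l.map Prod.snd).Nodup
    · have hcard : (u :: l.map Prod.snd).length ≤ Fintype.card V := hnd.length_le_card
      have : l.length + 1 ≤ Fintype.card V := by simpa using hcard
      exact ⟨l, hw, by omega, le_rfl⟩
    · obtain ⟨l', h1, h2, h3⟩ := walk_shorten_step hG l u v hw hnd
      obtain ⟨l'', g1, g2, g3⟩ := ihN l' (by omega) u v h1
      exact ⟨l'', g1, g2, le_trans g3 h3⟩

lemma dist_eq_hopDist_card [Fintype V] {G : WDigraph V} (hG : G.Nonneg) (u v : V) :
    G.dist u v = G.hopDist (Fintype.card V) u v := by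
  apply le_antisymm
  · exact le_iInf₂ fun l hl => dist_le_walkWeight hl.1
  · refine le_iInf₂ fun l hl => ?_
    obtain ⟨l', h1, h2, h3⟩ := walk_shorten hG l u v hl
    exact le_trans (hopDist_le_walkWeight h1 h2) h3

lemma augment_nonneg [DecidableEq V] {G : WDigraph V} (hG : G.Nonneg) (Hs : Finset (V × V)) :
    (G.augment Hs).Nonneg := by
  intro e
  by_cases h : e ∈ Hs
  · simp only [WDigraph.augment, h, if_true]
    exact ENNReal.toReal_nonneg
  · simp only [WDigraph.augment, h, if_false]
    exact hG e

lemma hopset_dist_ne_top [DecidableEq V] {G : WDigraph V} {β : ℕ} {ε : ℝ} {Hs : Finset (V × V)}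
    (h : IsHopset G β ε Hs) (hβ : 1 ≤ β) : ∀ e ∈ Hs, G.dist e.1 e.2 ≠ ⊤ := by
  intro e he
  have h1 := (h e.1 e.2).1
  have hw : IsWalkFrom (G.augment Hs) e.1 e.2 [(e.1, e.2)] := by
    refine ⟨?_, rfl, rfl⟩
    show (e.1, e.2) ∈ G.edges ∪ Hs
    exact Finset.mem_union.mpr (Or.inr (by simpa using he))
  have h2 : (G.augment Hs).hopDist β e.1 e.2 ≤ walkWeight (G.augment Hs) [(e.1, e.2)] :=
    hopDist_le_walkWeight hw (by simpa using hβ)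
  intro htop
  have h3 := le_trans h1 h2
  rw [htop] at h3
  exact walkWeight_ne_top (top_le_iff.mp h3)

lemma replace_walk [DecidableEq V] {G : WDigraph V} (hG : G.Nonneg) {Hs E' : Finset (V × V)}
    {t : ℝ} (ht : 1 ≤ t)
    (hrep : ∀ e ∈ Hs, ∃ r, IsWalkFrom G e.1 e.2 r ∧ (∀ f ∈ r, f ∈ E') ∧
      walkWeight G r ≤ ENNReal.ofReal t * ENNReal.ofReal ((G.augment Hs).w e)) :
    ∀ (l : List (V × V)) (u v : V), IsWalkFrom (G.augment Hs) u v l →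
      ∃ L, IsWalkFrom G u v L ∧
        walkWeight G L ≤ ENNReal.ofReal t * walkWeight (G.augment Hs) l ∧
        (L.filter (fun e => decide (e ∉ E'))).length ≤
          (l.filter (fun e => decide (e ∉ Hs))).length := by
  have hGa := augment_nonneg hG Hs
  intro l
  induction l with
  | nil =>
    intro u v hw
    refine ⟨[], hw, ?_, le_rfl⟩
    rw [walkWeight_nil]
    exact zero_le
  | cons e s ih =>
    intro u v hw
    obtain ⟨he, heu, hws⟩ := hw
    obtain ⟨L', hL1, hL2, hL3⟩ := ih e.2 v hws
    by_cases hes : e ∈ Hs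
    · obtain ⟨r, hr1, hr2, hr3⟩ := hrep e hes
      refine ⟨r ++ L', isWalkFrom_append (heu ▸ hr1) hL1, ?_, ?_⟩
      · rw [walkWeight_append hG, walkWeight_cons hGa, mul_add]
        exact add_le_add hr3 hL2
      · rw [List.filter_append]
        have hrnil : r.filter (fun e => decide (e ∉ E')) = [] := by
          rw [List.filter_eq_nil_iff]
          intro f hf
          simpa using hr2 f hf
        rw [hrnil, List.nil_append]
        refine le_trans hL3 (le_of_eq ?_)
        rw [List.filter_cons, if_neg (by simp [hes])]
    · have heG : e ∈ G.edges := by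
        have hmem : e ∈ G.edges ∪ Hs := he
        rcases Finset.mem_union.mp hmem with h | h
        · exact h
        · exact absurd h hes
      refine ⟨e :: L', ⟨heG, heu, hL1⟩, ?_, ?_⟩
      · rw [walkWeight_cons hG, walkWeight_cons hGa, mul_add]
        have hwe : (G.augment Hs).w e = G.w e := by
          simp only [WDigraph.augment, hes, if_false]
        refine add_le_add ?_ hL2
        rw [hwe]
        calc ENNReal.ofReal (G.w e) = 1 * ENNReal.ofReal (G.w e) := (one_mul _).symm
          _ ≤ ENNReal.ofReal t * ENNReal.ofReal (G.w e) :=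
            mul_le_mul_left (ENNReal.one_le_ofReal.mpr ht) _
      · rw [List.filter_cons, List.filter_cons, if_pos (show decide (e ∉ Hs) = true by simp [hes])]
        by_cases heE : e ∈ E'
        · rw [if_neg (by simp [heE])]
          simp only [List.length_cons]
          omega
        · rw [if_pos (by simp [heE])]
          simp only [List.length_cons]
          omega

end Hopsets

open Hopsets in
/-- A hierarchy of `(β_i, ε)`-hopsets `H_1, …, H_ℓ` for `G`, with
`n = β_0 ≥ β_1 ≥ ⋯ ≥ β_ℓ ≥ 1`, yields a subgraph `G' ⊆ G` with at most
`Σ_{i=1}^{ℓ} |H_i|·β_{i−1}` edges that is a `β_ℓ`-missing `(1+ε)^ℓ`-spanner for `G`. -/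
theorem stmt_0 {V : Type} [Fintype V] [DecidableEq V]
    (G : WDigraph V) (hG : G.Nonneg)
    (n : ℕ) (hn : Fintype.card V = n)
    (ε : ℝ) (hε : 0 ≤ ε)
    (ℓ : ℕ) (hℓ : 1 ≤ ℓ)
    (β : ℕ → ℕ) (hβ0 : β 0 = n)
    (hβmono : ∀ i < ℓ, β (i + 1) ≤ β i)
    (hβℓ : 1 ≤ β ℓ)
    (H : ℕ → Finset (V × V))
    (hH : ∀ i, 1 ≤ i → i ≤ ℓ → IsHopset G (β i) ε (H i)) :
    ∃ E' ⊆ G.edges,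
      E'.card ≤ ∑ i ∈ Finset.range ℓ, (H (i + 1)).card * β i ∧
      IsMissingSpanner G E' (β ℓ) ((1 + ε) ^ ℓ) := by
  classical
  have hmono : ∀ i j, i ≤ j → j ≤ ℓ → β j ≤ β i := by
    intro i j hij
    induction j, hij using Nat.le_induction with
    | base => intro _; exact le_rfl
    | succ j hj ihj => intro hjl; exact le_trans (hβmono j (by omega)) (ihj (by omega))
  have hβpos : ∀ i, i ≤ ℓ → 1 ≤ β i := fun i hi => le_trans hβℓ (hmono i ℓ hi le_rfl)
  have hε1 : (0 : ℝ) ≤ 1 + ε := by linarith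
  -- the key invariant
  have Q : ∀ i, 1 ≤ i → i ≤ ℓ → ∃ E' : Finset (V × V), E' ⊆ G.edges ∧
      E'.card ≤ ∑ k ∈ Finset.range i, (H (k + 1)).card * β k ∧
      ∀ e ∈ H i, ∃ r, IsWalkFrom G e.1 e.2 r ∧ (∀ f ∈ r, f ∈ E') ∧
        walkWeight G r ≤ ENNReal.ofReal ((1 + ε) ^ (i - 1)) * G.dist e.1 e.2 := by
    intro i hi
    induction i, hi using Nat.le_induction with
    | base =>
      intro _
      have hne : ∀ e ∈ H 1, G.dist e.1 e.2 ≠ ⊤ :=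
        hopset_dist_ne_top (hH 1 le_rfl hℓ) (hβpos 1 hℓ)
      have hch : ∀ e ∈ H 1, ∃ r, IsWalkFrom G e.1 e.2 r ∧ r.length ≤ n ∧
          walkWeight G r = G.dist e.1 e.2 := by
        intro e he
        have hd : G.dist e.1 e.2 = G.hopDist n e.1 e.2 := by
          rw [← hn]; exact dist_eq_hopDist_card hG e.1 e.2
        have hnt : G.hopDist n e.1 e.2 ≠ ⊤ := hd ▸ hne e he
        obtain ⟨r, h1, h2, h3⟩ := hopDist_attained hnt
        exact ⟨r, h1, h2, by rw [h3, hd]⟩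
      set f : V × V → List (V × V) :=
        fun e => if h : e ∈ H 1 then (hch e h).choose else [] with hf
      refine ⟨(H 1).biUnion (fun e => (f e).toFinset), ?_, ?_, ?_⟩
      · intro x hx
        obtain ⟨e, he, hx⟩ := Finset.mem_biUnion.mp hx
        rw [List.mem_toFinset] at hx
        have hfe : f e = (hch e he).choose := dif_pos he
        exact mem_edges_of_walk ((hch e he).choose_spec.1) x (hfe ▸ hx)
      · refine le_trans Finset.card_biUnion_le ?_
        have hr1 : ∑ k ∈ Finset.range 1, (H (k + 1)).card * β k = (H 1).card * β 0 := by simp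
        rw [hr1, hβ0]
        calc ∑ e ∈ H 1, (f e).toFinset.card ≤ ∑ _e ∈ H 1, n := by
              refine Finset.sum_le_sum ?_
              intro e he
              have hfe : f e = (hch e he).choose := dif_pos he
              refine le_trans (List.toFinset_card_le _) ?_
              rw [hfe]
              exact (hch e he).choose_spec.2.1
          _ = (H 1).card * n := by rw [Finset.sum_const, smul_eq_mul]
      · intro e he
        have hfe : f e = (hch e he).choose := dif_pos he
        obtain ⟨h1, h2, h3⟩ := (hch e he).choose_spec
        refine ⟨(hch e he).choose, h1, ?_, ?_⟩
        · intro g hg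
          exact Finset.mem_biUnion.mpr ⟨e, he, List.mem_toFinset.mpr (hfe ▸ hg)⟩
        · rw [h3]
          simp
    | succ i hi1 ihi =>
      intro hi1l
      obtain ⟨E, hEsub, hEcard, hEwalk⟩ := ihi (by omega)
      have hhopi := hH i hi1 (by omega)
      have hdii : ∀ e ∈ H i, G.dist e.1 e.2 ≠ ⊤ :=
        hopset_dist_ne_top hhopi (hβpos i (by omega))
      have ht1 : (1 : ℝ) ≤ (1 + ε) ^ (i - 1) := one_le_pow₀ (by linarith)
      have hrep : ∀ e ∈ H i, ∃ r, IsWalkFrom G e.1 e.2 r ∧ (∀ f ∈ r, f ∈ E) ∧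
          walkWeight G r ≤ ENNReal.ofReal ((1 + ε) ^ (i - 1)) *
            ENNReal.ofReal ((G.augment (H i)).w e) := by
        intro e he
        obtain ⟨r, h1, h2, h3⟩ := hEwalk e he
        refine ⟨r, h1, h2, ?_⟩
        have hwe : (G.augment (H i)).w e = (G.dist e.1 e.2).toReal := by
          simp only [WDigraph.augment, he, if_true]
        rw [hwe, ENNReal.ofReal_toReal (hdii e he)]
        exact h3
      have hne1 : ∀ e ∈ H (i + 1), G.dist e.1 e.2 ≠ ⊤ :=
        hopset_dist_ne_top (hH (i + 1) (by omega) hi1l) (hβpos (i + 1) hi1l)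
      have hch : ∀ e ∈ H (i + 1), ∃ L, IsWalkFrom G e.1 e.2 L ∧
          (∀ g ∈ L, g ∈ G.edges) ∧
          (L.filter (fun x => decide (x ∉ E))).length ≤ β i ∧
          walkWeight G L ≤ ENNReal.ofReal ((1 + ε) ^ i) * G.dist e.1 e.2 := by
        intro e he
        have h2 := (hhopi e.1 e.2).2
        have hfin : (G.augment (H i)).hopDist (β i) e.1 e.2 ≠ ⊤ := by
          intro htop
          rw [htop] at h2
          exact (ENNReal.mul_ne_top ENNReal.ofReal_ne_top (hne1 e he)) (top_le_iff.mp h2)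
        obtain ⟨l, hl1, hl2, hl3⟩ := hopDist_attained hfin
        obtain ⟨L, hL1, hL2, hL3⟩ := replace_walk hG ht1 hrep l e.1 e.2 hl1
        refine ⟨L, hL1, mem_edges_of_walk hL1, ?_, ?_⟩
        · exact le_trans hL3 (le_trans (List.length_filter_le _ _) hl2)
        · refine le_trans hL2 ?_
          calc ENNReal.ofReal ((1 + ε) ^ (i - 1)) * walkWeight (G.augment (H i)) l
              ≤ ENNReal.ofReal ((1 + ε) ^ (i - 1)) *
                (ENNReal.ofReal (1 + ε) * G.dist e.1 e.2) :=
                mul_le_mul_right (hl3.le.trans h2) _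
            _ = ENNReal.ofReal ((1 + ε) ^ i) * G.dist e.1 e.2 := by
                rw [← mul_assoc, ← ENNReal.ofReal_mul (pow_nonneg hε1 _), ← pow_succ]
                have hieq : i - 1 + 1 = i := by omega
                rw [hieq]
      set F : V × V → List (V × V) :=
        fun e => if h : e ∈ H (i + 1) then (hch e h).choose else [] with hF
      refine ⟨E ∪ (H (i + 1)).biUnion
          (fun e => ((F e).filter (fun x => decide (x ∉ E))).toFinset), ?_, ?_, ?_⟩
      · intro x hx
        rcases Finset.mem_union.mp hx with h | h
        · exact hEsub h
        · obtain ⟨e, he, hx⟩ := Finset.mem_biUnion.mp h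
          rw [List.mem_toFinset] at hx
          have hfe : F e = (hch e he).choose := dif_pos he
          have hxF : x ∈ F e := List.mem_of_mem_filter hx
          exact (hch e he).choose_spec.2.1 x (hfe ▸ hxF)
      · refine le_trans (Finset.card_union_le _ _) ?_
        rw [Finset.sum_range_succ]
        refine add_le_add hEcard (le_trans Finset.card_biUnion_le ?_)
        calc ∑ e ∈ H (i + 1), ((F e).filter (fun x => decide (x ∉ E))).toFinset.card
            ≤ ∑ _e ∈ H (i + 1), β i := by
              refine Finset.sum_le_sum ?_
              intro e he
              have hfe : F e = (hch e he).choose := dif_pos he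
              refine le_trans (List.toFinset_card_le _) ?_
              rw [hfe]
              exact (hch e he).choose_spec.2.2.1
          _ = (H (i + 1)).card * β i := by rw [Finset.sum_const, smul_eq_mul]
      · intro e he
        have hfe : F e = (hch e he).choose := dif_pos he
        obtain ⟨h1, h2, h3, h4⟩ := (hch e he).choose_spec
        refine ⟨(hch e he).choose, h1, ?_, ?_⟩
        · intro g hg
          by_cases hgE : g ∈ E
          · exact Finset.mem_union.mpr (Or.inl hgE)
          · refine Finset.mem_union.mpr (Or.inr (Finset.mem_biUnion.mpr ⟨e, he, ?_⟩))
            rw [List.mem_toFinset, hfe]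
            exact List.mem_filter.mpr ⟨hg, by simpa using hgE⟩
        · have hieq : i + 1 - 1 = i := by omega
          rw [hieq]
          exact h4
  -- assemble
  obtain ⟨E', hsub, hcard, hwalks⟩ := Q ℓ hℓ le_rfl
  refine ⟨E', hsub, hcard, ?_⟩
  intro u v hreach
  obtain ⟨l0, hl0⟩ := hreach
  have hdfin : G.dist u v ≠ ⊤ := by
    intro h
    have hle := dist_le_walkWeight hl0
    rw [h] at hle
    exact walkWeight_ne_top (top_le_iff.mp hle)
  have hhop := hH ℓ hℓ le_rfl
  have hdℓ : ∀ e ∈ H ℓ, G.dist e.1 e.2 ≠ ⊤ :=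
    hopset_dist_ne_top hhop (hβpos ℓ le_rfl)
  have ht1 : (1 : ℝ) ≤ (1 + ε) ^ (ℓ - 1) := one_le_pow₀ (by linarith)
  have hrep : ∀ e ∈ H ℓ, ∃ r, IsWalkFrom G e.1 e.2 r ∧ (∀ f ∈ r, f ∈ E') ∧
      walkWeight G r ≤ ENNReal.ofReal ((1 + ε) ^ (ℓ - 1)) *
        ENNReal.ofReal ((G.augment (H ℓ)).w e) := by
    intro e he
    obtain ⟨r, h1, h2, h3⟩ := hwalks e he
    refine ⟨r, h1, h2, ?_⟩
    have hwe : (G.augment (H ℓ)).w e = (G.dist e.1 e.2).toReal := by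
      simp only [WDigraph.augment, he, if_true]
    rw [hwe, ENNReal.ofReal_toReal (hdℓ e he)]
    exact h3
  have h2 := (hhop u v).2
  have hfin : (G.augment (H ℓ)).hopDist (β ℓ) u v ≠ ⊤ := by
    intro htop
    rw [htop] at h2
    exact (ENNReal.mul_ne_top ENNReal.ofReal_ne_top hdfin) (top_le_iff.mp h2)
  obtain ⟨l, hl1, hl2, hl3⟩ := hopDist_attained hfin
  obtain ⟨L, hL1, hL2, hL3⟩ := replace_walk hG ht1 hrep l u v hl1
  refine ⟨L, hL1, ?_, ?_⟩
  · refine le_trans hL2 ?_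
    calc ENNReal.ofReal ((1 + ε) ^ (ℓ - 1)) * walkWeight (G.augment (H ℓ)) l
        ≤ ENNReal.ofReal ((1 + ε) ^ (ℓ - 1)) * (ENNReal.ofReal (1 + ε) * G.dist u v) :=
          mul_le_mul_right (hl3.le.trans h2) _
      _ = ENNReal.ofReal ((1 + ε) ^ ℓ) * G.dist u v := by
          rw [← mul_assoc, ← ENNReal.ofReal_mul (pow_nonneg hε1 _), ← pow_succ]
          have hleq : ℓ - 1 + 1 = ℓ := by omega
          rw [hleq]
  · exact le_trans hL3 (le_trans (List.length_filter_le _ _) hl2)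
end

section
/- Fix an integer k ≥ 1 and suppose (Erdős girth conjecture, bipartite form) that there is a constant c > 0 such that for every n there exists an unweighted bipartite graph G'=(V,U,E') with |V|=|U|=n, |E'| ≥ c·n^{1+1/k}, and girth at least 2k+2. Then there is a constant c' > 0 such that for all sufficiently large n and every σ with 1 ≤ σ ≤ n, there exists an unweighted bipartite graph G=(V,S,E) with |V|=n, |S|=σ and |E| ≥ c'·σ·n^{1/k}, such that for every edge (u,v) ∈ E, removing (u,v) from G yields a graph G' with dist_{G'}(u,v) ≥ 2k+1. -/
open SimpleGraph

section my_helpers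
variable {α : Type*}


-- averaging lemma
lemma my_avg {α : Type*} [DecidableEq α] (f : α → ℕ) :
    ∀ (σ : ℕ) (t : Finset α), σ ≤ t.card →
      ∃ s ⊆ t, s.card = σ ∧ σ * ∑ x ∈ t, f x ≤ t.card * ∑ x ∈ s, f x := by
  intro σ
  induction σ with
  | zero => exact fun t _ => ⟨∅, Finset.empty_subset t, rfl, by simp⟩
  | succ σ ih =>
    intro t ht
    have hne : t.Nonempty := Finset.card_pos.mp (by omega)
    obtain ⟨x, hx, hmax⟩ := t.exists_max_image f hne
    have hcard : t.card = (t.erase x).card + 1 := by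
      rw [Finset.card_erase_of_mem hx]; omega
    obtain ⟨s', hs't, hs'c, hs'⟩ := ih (t.erase x) (by omega)
    have hxs' : x ∉ s' := fun h => (Finset.mem_erase.mp (hs't h)).1 rfl
    refine ⟨insert x s', ?_, ?_, ?_⟩
    · exact Finset.insert_subset hx (hs't.trans (Finset.erase_subset x t))
    · rw [Finset.card_insert_of_notMem hxs', hs'c]
    · have hsum : ∑ y ∈ t, f y = f x + ∑ y ∈ t.erase x, f y :=
        (Finset.add_sum_erase t f hx).symm
      have hE : ∑ y ∈ t.erase x, f y ≤ (t.erase x).card * f x := by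
        calc ∑ y ∈ t.erase x, f y ≤ ∑ _y ∈ t.erase x, f x :=
              Finset.sum_le_sum fun y hy => hmax y (Finset.mem_of_mem_erase hy)
          _ = (t.erase x).card * f x := by rw [Finset.sum_const, smul_eq_mul]
      rw [Finset.sum_insert hxs', hsum]
      set n' := (t.erase x).card with hn'
      set E := ∑ y ∈ t.erase x, f y
      set F := ∑ y ∈ s', f y
      rw [hcard]
      have hσn' : σ ≤ n' := by omega
      rcases Nat.eq_zero_or_pos n' with h0 | hpos
      · have hσ0 : σ = 0 := by omega
        subst hσ0
        have : t.erase x = ∅ := Finset.card_eq_zero.mp h0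
        have hE0 : E = 0 := by simp [E, this]
        simp [h0, hE0]
      · have key : n' * ((σ + 1) * (f x + E)) ≤ n' * ((n' + 1) * (f x + F)) := by
          nlinarith [hs', hE, hσn', Nat.mul_le_mul_left (n' + 1) hs']
        exact Nat.le_of_mul_le_mul_left key hpos


lemma my_bip_count {α β : Type*} [Fintype α] [Fintype β]
    (H : SimpleGraph (α ⊕ β))
    (hb : ∀ u v, H.Adj u v → (u.isLeft ∧ v.isRight) ∨ (u.isRight ∧ v.isLeft)) :
    H.edgeSet.ncard = ∑ b : β, Nat.card {a : α // H.Adj (Sum.inl a) (Sum.inr b)} := by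
  classical
  rw [← Nat.card_coe_set_eq]
  have key : Nat.card H.edgeSet
      = Nat.card {p : β × α // H.Adj (Sum.inl p.2) (Sum.inr p.1)} := by
    refine (Nat.card_congr (Equiv.ofBijective
      (fun p => (⟨s(Sum.inl p.1.2, Sum.inr p.1.1), p.2⟩ : H.edgeSet)) ⟨?_, ?_⟩)).symm
    · rintro ⟨⟨b, a⟩, h⟩ ⟨⟨b', a'⟩, h'⟩ he
      simp only [Subtype.mk.injEq, Subtype.ext_iff, Sym2.eq_iff] at he
      rcases he with ⟨h1, h2⟩ | ⟨h1, h2⟩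
      · simp_all
      · simp_all
    · rintro ⟨e, he⟩
      induction e with
      | _ x y =>
        have hadj : H.Adj x y := he
        rcases hb x y hadj with ⟨hx, hy⟩ | ⟨hx, hy⟩
        · obtain ⟨a, rfl⟩ := Sum.isLeft_iff.mp hx
          obtain ⟨b, rfl⟩ := Sum.isRight_iff.mp hy
          exact ⟨⟨(b, a), hadj⟩, rfl⟩
        · obtain ⟨b, rfl⟩ := Sum.isRight_iff.mp hx
          obtain ⟨a, rfl⟩ := Sum.isLeft_iff.mp hy
          exact ⟨⟨(b, a), hadj.symm⟩, by simp [Sym2.eq_swap]⟩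
  rw [key, Nat.card_congr (Equiv.subtypeProdEquivSigmaSubtype
    fun (b : β) (a : α) => H.Adj (Sum.inl a) (Sum.inr b))]
  rw [Nat.card_eq_fintype_card, Fintype.card_sigma]
  exact Finset.sum_congr rfl fun b _ => (Nat.card_eq_fintype_card).symm


lemma my_hom_edist_le {V W : Type*} {G : SimpleGraph V} {G' : SimpleGraph W}
    (f : G →g G') (u v : V) : G'.edist (f u) (f v) ≤ G.edist u v := by
  by_cases h : G.Reachable u v
  · obtain ⟨w, hw⟩ := h.exists_walk_length_eq_edist
    calc G'.edist (f u) (f v) ≤ (w.map f).length := edist_le _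
      _ = w.length := by rw [SimpleGraph.Walk.length_map]
      _ = G.edist u v := hw
  · rw [edist_eq_top_of_not_reachable h]; exact le_top

def my_delete_hom {V W : Type*} {G : SimpleGraph V} {G' : SimpleGraph W}
    (f : G →g G') (hf : Function.Injective f) (u v : V) :
    (G.deleteEdges {s(u, v)}) →g (G'.deleteEdges {s(f u, f v)}) where
  toFun := f
  map_rel' := by
    intro a b h
    rw [SimpleGraph.deleteEdges_adj] at h ⊢
    refine ⟨f.map_rel h.1, ?_⟩
    intro hmem
    apply h.2
    rw [Set.mem_singleton_iff] at hmem ⊢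
    have : Sym2.map f s(a, b) = Sym2.map f s(u, v) := by
      simpa [Sym2.map_pair_eq] using hmem
    exact Sym2.map.injective hf this

lemma my_girth_edist {V : Type*} (G : SimpleGraph V) {k : ℕ} {u v : V}
    (h : G.Adj u v) (hg : (2 * k + 2 : ℕ∞) ≤ G.egirth) :
    (2 * k + 1 : ℕ∞) ≤ (G.deleteEdges {s(u, v)}).edist u v := by
  classical
  by_contra hlt
  push_neg at hlt
  set H := G.deleteEdges {s(u, v)} with hH
  have hne : H.edist u v ≠ ⊤ := by
    intro htop
    rw [htop] at hlt
    exact (not_top_lt hlt)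
  obtain ⟨p, hp⟩ := exists_walk_of_edist_ne_top hne
  have hplen : (p.length : ℕ∞) < 2 * k + 1 := by rw [hp]; exact hlt
  have hplen' : p.length ≤ 2 * k := by
    have h1 : (p.length : ℕ∞) < ((2 * k + 1 : ℕ) : ℕ∞) := by
      refine hplen.trans_eq ?_
      push_cast; ring
    have := Nat.cast_lt.mp h1
    omega
  set q := p.toPath with hq
  have hqlen : (q : H.Walk u v).length ≤ 2 * k :=
    le_trans (SimpleGraph.Walk.length_bypass_le p) hplen'
  have hsub : ∀ e ∈ (q : H.Walk u v).edges, e ∈ G.edgeSet := by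
    intro e he
    have := (q : H.Walk u v).edges_subset_edgeSet he
    rw [hH, edgeSet_deleteEdges] at this
    exact this.1
  set q' := (q : H.Walk u v).transfer G hsub with hq'
  have hq'path : q'.IsPath := q.2.transfer hsub
  have hq'edges : s(v, u) ∉ q'.edges := by
    rw [hq', SimpleGraph.Walk.edges_transfer]
    intro hmem
    have := (q : H.Walk u v).edges_subset_edgeSet hmem
    rw [hH, edgeSet_deleteEdges] at this
    exact this.2 (by rw [Set.mem_singleton_iff, Sym2.eq_swap])
  have hcyc : (SimpleGraph.Walk.cons h.symm q').IsCycle :=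
    SimpleGraph.Path.cons_isCycle ⟨q', hq'path⟩ h.symm hq'edges
  have hgle : G.egirth ≤ (SimpleGraph.Walk.cons h.symm q').length :=
    le_egirth.mp le_rfl v (SimpleGraph.Walk.cons h.symm q') hcyc
  have hlen : (SimpleGraph.Walk.cons h.symm q').length = q'.length + 1 := rfl
  have hq'len : q'.length ≤ 2 * k := by
    rw [hq', SimpleGraph.Walk.length_transfer]
    exact hqlen
  have : G.egirth ≤ ((2 * k + 1 : ℕ) : ℕ∞) := by
    refine hgle.trans ?_
    rw [hlen]
    exact Nat.cast_le.mpr (by omega)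
  have hcontra : ((2 * k + 2 : ℕ) : ℕ∞) ≤ ((2 * k + 1 : ℕ) : ℕ∞) :=
    le_trans (by exact_mod_cast hg) this
  have := Nat.cast_le.mp hcontra
  omega

private def myBip {n σ : ℕ} (R : Fin n → Fin σ → Prop) : SimpleGraph (Fin n ⊕ Fin σ) where
  Adj x y := (∃ a b, x = Sum.inl a ∧ y = Sum.inr b ∧ R a b) ∨
    (∃ a b, x = Sum.inr b ∧ y = Sum.inl a ∧ R a b)
  symm := ⟨by
    rintro x y (⟨a, b, rfl, rfl, h⟩ | ⟨a, b, rfl, rfl, h⟩)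
    · exact Or.inr ⟨a, b, rfl, rfl, h⟩
    · exact Or.inl ⟨a, b, rfl, rfl, h⟩⟩
  loopless := ⟨by
    rintro x (⟨a, b, rfl, h, _⟩ | ⟨a, b, rfl, h, _⟩) <;> simp_all⟩

private lemma myBip_adj {n σ : ℕ} (R : Fin n → Fin σ → Prop) (a : Fin n) (b : Fin σ) :
    (myBip R).Adj (Sum.inl a) (Sum.inr b) ↔ R a b := by
  constructor
  · rintro (⟨a', b', h1, h2, h⟩ | ⟨a', b', h1, h2, h⟩) <;> simp_all
  · intro h; exact Or.inl ⟨a, b, rfl, rfl, h⟩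

private lemma myBip_cross {n σ : ℕ} (R : Fin n → Fin σ → Prop) :
    ∀ u v, (myBip R).Adj u v → (u.isLeft ∧ v.isRight) ∨ (u.isRight ∧ v.isLeft) := by
  rintro u v (⟨a, b, rfl, rfl, h⟩ | ⟨a, b, rfl, rfl, h⟩) <;> simp

end my_helpers

open scoped ENat

/-- Assuming the bipartite form of the Erdős girth conjecture for
parameter `k` (bipartite graphs with parts of size `n`, at least `c·n^{1+1/k}` edges
and girth at least `2k+2`), for all sufficiently large `n` and every `1 ≤ σ ≤ n` there
is a bipartite graph `G = (V, S, E)` with `|V| = n`, `|S| = σ` and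
`|E| ≥ c'·σ·n^{1/k}` in which deleting any edge `(u,v)` leaves `u` and `v` at
distance at least `2k+1`. -/
theorem stmt_14 (k : ℕ) (hk : 1 ≤ k)
    (hyp : ∃ c : ℝ, 0 < c ∧ ∀ n : ℕ, ∃ G' : SimpleGraph (Fin n ⊕ Fin n),
      (∀ u v, G'.Adj u v → (u.isLeft ∧ v.isRight) ∨ (u.isRight ∧ v.isLeft)) ∧
      c * (n : ℝ) ^ (1 + 1 / (k : ℝ)) ≤ (G'.edgeSet.ncard : ℝ) ∧
      (2 * k + 2 : ℕ∞) ≤ G'.egirth) :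
    ∃ c' : ℝ, 0 < c' ∧ ∃ n0 : ℕ, ∀ n ≥ n0, ∀ σ : ℕ, 1 ≤ σ → σ ≤ n →
      ∃ G : SimpleGraph (Fin n ⊕ Fin σ),
        (∀ u v, G.Adj u v → (u.isLeft ∧ v.isRight) ∨ (u.isRight ∧ v.isLeft)) ∧
        c' * (σ : ℝ) * (n : ℝ) ^ (1 / (k : ℝ)) ≤ (G.edgeSet.ncard : ℝ) ∧
        ∀ u v, G.Adj u v →
          (2 * k + 1 : ℕ∞) ≤ (G.deleteEdges {s(u, v)}).edist u v := by
  classical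
  obtain ⟨c, hc, hGC⟩ := hyp
  refine ⟨c, hc, 1, ?_⟩
  intro n hn σ hσ1 hσn
  obtain ⟨G', hcross, hedges, hgirth⟩ := hGC n
  set f : Fin n → ℕ := fun w => Nat.card {a : Fin n // G'.Adj (Sum.inl a) (Sum.inr w)} with hf
  have htotal : G'.edgeSet.ncard = ∑ w : Fin n, f w := my_bip_count G' hcross
  obtain ⟨T, hTsub, hTcard, hTsum⟩ := my_avg f σ Finset.univ (by simpa using hσn)
  let e0 : Fin σ ≃ T := (T.equivFinOfCardEq hTcard).symm
  let e : Fin σ → Fin n := fun b => (e0 b : Fin n)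
  have he : Function.Injective e := fun b b' h => e0.injective (Subtype.ext h)
  set G := myBip (fun a b => G'.Adj (Sum.inl a) (Sum.inr (e b))) with hG
  refine ⟨G, myBip_cross _, ?_, ?_⟩
  · -- edge count
    have hGcount : G.edgeSet.ncard = ∑ b : Fin σ, f (e b) := by
      rw [my_bip_count G (myBip_cross _)]
      exact Finset.sum_congr rfl fun b _ =>
        Nat.card_congr (Equiv.subtypeEquivRight fun a => myBip_adj _ a b)
    have hsum_e : ∑ b : Fin σ, f (e b) = ∑ w ∈ T, f w := by
      rw [← Finset.sum_coe_sort T f]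
      exact Fintype.sum_equiv e0 _ _ fun b => rfl
    have hucard : (Finset.univ : Finset (Fin n)).card = n := by simp
    have hnat : σ * ∑ w : Fin n, f w ≤ n * G.edgeSet.ncard := by
      rw [hGcount, hsum_e]
      rw [hucard] at hTsum
      exact hTsum
    have hn0 : (0 : ℝ) < n := by
      have : (1 : ℕ) ≤ n := hn
      exact_mod_cast Nat.lt_of_lt_of_le Nat.zero_lt_one this
    have hpow : (n : ℝ) ^ (1 + 1 / (k : ℝ)) = n * (n : ℝ) ^ (1 / (k : ℝ)) := by
      rw [Real.rpow_add hn0, Real.rpow_one]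
    have hE' : c * (n : ℝ) ^ (1 + 1 / (k : ℝ)) ≤ ((∑ w : Fin n, f w : ℕ) : ℝ) := by
      rw [← htotal]; exact hedges
    have hnatR : (σ : ℝ) * ((∑ w : Fin n, f w : ℕ) : ℝ) ≤ (n : ℝ) * (G.edgeSet.ncard : ℝ) := by
      exact_mod_cast hnat
    have h1 : c * (σ : ℝ) * (n : ℝ) ^ (1 / (k : ℝ)) * n ≤ (G.edgeSet.ncard : ℝ) * n := by
      calc c * (σ : ℝ) * (n : ℝ) ^ (1 / (k : ℝ)) * n
          = (σ : ℝ) * (c * (n : ℝ) ^ (1 + 1 / (k : ℝ))) := by rw [hpow]; ring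
        _ ≤ (σ : ℝ) * ((∑ w : Fin n, f w : ℕ) : ℝ) :=
            mul_le_mul_of_nonneg_left hE' (by positivity)
        _ ≤ (n : ℝ) * (G.edgeSet.ncard : ℝ) := hnatR
        _ = (G.edgeSet.ncard : ℝ) * n := by ring
    exact le_of_mul_le_mul_right h1 hn0
  · -- distance
    intro u v huv
    have hφmap : ∀ x y, G.Adj x y → G'.Adj (Sum.map id e x) (Sum.map id e y) := by
      rintro x y (⟨a, b, rfl, rfl, h⟩ | ⟨a, b, rfl, rfl, h⟩)
      · exact h
      · exact h.symm
    let φ : G →g G' := ⟨Sum.map id e, fun {x y} h => hφmap x y h⟩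
    have hφinj : Function.Injective (Sum.map (id : Fin n → Fin n) e) :=
      Function.Injective.sumMap Function.injective_id he
    let ψ := my_delete_hom φ hφinj u v
    have hadj : G'.Adj (φ u) (φ v) := φ.map_rel huv
    calc (2 * k + 1 : ℕ∞) ≤ (G'.deleteEdges {s(φ u, φ v)}).edist (φ u) (φ v) :=
          my_girth_edist G' hadj hgirth
      _ ≤ (G.deleteEdges {s(u, v)}).edist u v := by
          have h2 : (G'.deleteEdges {s(φ u, φ v)}).edist (φ u) (φ v)
              ≤ (G.deleteEdges {s(u, v)}).edist u v := my_hom_edist_le ψ u v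
          exact h2
end

section
/- For every ε ∈ (0,1), every integer k ≥ 1, and every δ > 0 there exists n_0 such that for all n ≥ n_0 and every n-vertex undirected graph G with nonnegative, polynomially bounded edge weights, there exists a subgraph G* ⊆ G with at most n^{1+δ} + (1/ε)^{1+1/k}·n^δ edges that is an ε-slack (12k−1+δ)-spanner of G. -/
open scoped ENNReal

namespace Hopsets

/-- `E'` (a subgraph of `G`) is an `ε`-slack `t`-spanner: for every vertex `v` there
is a set `S` of at least `(1−ε)n` vertices, all at least as far from `v` as every
vertex outside `S`, such that every `w ∈ S` satisfies
`dist_{G'}(v,w) ≤ t·dist_G(v,w)`. -/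
def IsSlackSpanner {V : Type} [Fintype V] [DecidableEq V]
    (G : WDigraph V) (E' : Finset (V × V)) (ε t : ℝ) : Prop :=
  ∀ v : V, ∃ S : Finset V,
    (1 - ε) * (Fintype.card V : ℝ) ≤ (S.card : ℝ) ∧
    (∀ x ∈ S, ∀ y ∉ S, G.dist v y ≤ G.dist v x) ∧
    ∀ w ∈ S, (G.sub E').dist v w ≤ ENNReal.ofReal t * G.dist v w

end Hopsets

namespace Hopsets

variable {V : Type}

-- ## basics
lemma walk_append {G : WDigraph V} {u v w : V} {l₁ l₂ : List (V × V)}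
    (h1 : IsWalkFrom G u v l₁) (h2 : IsWalkFrom G v w l₂) : IsWalkFrom G u w (l₁ ++ l₂) := by
  induction l₁ generalizing u with
  | nil => rw [List.nil_append]; exact (show u = v from h1) ▸ h2
  | cons e t ih =>
      obtain ⟨he, h1e, ht⟩ := h1
      exact ⟨he, h1e, ih ht⟩

lemma walk_mem_edges {G : WDigraph V} {u v : V} {l : List (V × V)}
    (h : IsWalkFrom G u v l) : ∀ e ∈ l, e ∈ G.edges := by
  induction l generalizing u with
  | nil => simp
  | cons f t ih =>
      obtain ⟨hf, _, ht⟩ := h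
      intro e he
      rcases List.mem_cons.1 he with rfl | he
      · exact hf
      · exact ih ht e he

lemma dist_self (G : WDigraph V) (v : V) : G.dist v v = 0 := by
  refine le_antisymm ?_ zero_le
  have : IsWalkFrom G v v [] := rfl
  simpa [walkWeight] using dist_le_walkWeight this

lemma dist_eq_top_of_not_reachable {G : WDigraph V} {u v : V}
    (h : ¬ G.Reachable u v) : G.dist u v = ⊤ := by
  have : {l : List (V × V) | IsWalkFrom G u v l} = ∅ := by
    ext l; simp only [Set.mem_setOf_eq, Set.mem_empty_iff_false, iff_false]
    exact fun hl => h ⟨l, hl⟩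
  rw [WDigraph.dist, this]; simp

lemma reachable_of_dist_ne_top {G : WDigraph V} {u v : V}
    (h : G.dist u v ≠ ⊤) : G.Reachable u v := by
  by_contra hr; exact h (dist_eq_top_of_not_reachable hr)

lemma walkWeight_append_le (G : WDigraph V) (l₁ l₂ : List (V × V)) :
    walkWeight G (l₁ ++ l₂) ≤ walkWeight G l₁ + walkWeight G l₂ := by
  rw [walkWeight, List.map_append, List.sum_append]
  exact ENNReal.ofReal_add_le

-- reverse walks
lemma walk_reverse {G : WDigraph V} (hsym : G.Symmetric) {u v : V} {l : List (V × V)}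
    (h : IsWalkFrom G u v l) : IsWalkFrom G v u (l.reverse.map Prod.swap) := by
  induction l generalizing u with
  | nil => exact (show u = v from h).symm
  | cons e t ih =>
      obtain ⟨he, h1e, ht⟩ := h
      have hrev := ih ht
      rw [List.reverse_cons, List.map_append]
      refine walk_append hrev ?_
      exact ⟨(hsym e he).1, rfl, h1e⟩

lemma walkWeight_reverse {G : WDigraph V} (hsym : G.Symmetric) {u v : V} {l : List (V × V)}
    (h : IsWalkFrom G u v l) : walkWeight G (l.reverse.map Prod.swap) = walkWeight G l := by
  rw [walkWeight, walkWeight]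
  congr 1
  induction l generalizing u with
  | nil => rfl
  | cons e t ih =>
      obtain ⟨he, _, ht⟩ := h
      rw [List.reverse_cons, List.map_append, List.map_append, List.sum_append,
        List.map_cons, List.map_cons]
      simp only [List.map_nil, List.sum_cons, List.sum_nil]
      rw [ih ht]
      have : G.w e.swap = G.w e := (hsym e he).2
      rw [this]
      simp [add_comm]

lemma dist_symm {G : WDigraph V} (hsym : G.Symmetric) (u v : V) :
    G.dist u v = G.dist v u := by
  have key : ∀ a b : V, G.dist b a ≤ G.dist a b := by
    intro a b
    refine le_iInf₂ fun l hl => ?_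
    calc G.dist b a ≤ walkWeight G (l.reverse.map Prod.swap) := dist_le_walkWeight (walk_reverse hsym hl)
    _ = walkWeight G l := walkWeight_reverse hsym hl
  exact le_antisymm (key v u) (key u v)

-- ## shortening
lemma walk_suffix {G : WDigraph V} {v : V} :
    ∀ {l : List (V × V)} {a u : V}, IsWalkFrom G a v l → u ∈ a :: l.map Prod.snd →
    ∃ p s, l = p ++ s ∧ IsWalkFrom G u v s ∧ (u :: s.map Prod.snd) <:+ (a :: l.map Prod.snd) := by
  intro l
  induction l with
  | nil =>
      intro a u h hm
      have : u = a := by simpa using hm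
      exact ⟨[], [], rfl, this ▸ h, by simp [this]⟩
  | cons e t ih =>
      intro a u h hm
      obtain ⟨he, h1e, ht⟩ := h
      by_cases hu : u = a
      · exact ⟨[], e :: t, rfl, hu ▸ (⟨he, h1e, ht⟩ : IsWalkFrom G a v (e :: t)), hu ▸ List.suffix_refl _⟩
      · have hm' : u ∈ e.2 :: t.map Prod.snd := by
          rcases List.mem_cons.1 hm with h' | h'
          · exact absurd h' hu
          · simpa using h'
        obtain ⟨p, s, hts, hws, hsuf⟩ := ih ht hm'
        refine ⟨e :: p, s, by rw [hts]; rfl, hws, ?_⟩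
        calc (u :: s.map Prod.snd) <:+ (e.2 :: t.map Prod.snd) := hsuf
        _ <:+ (a :: (e :: t).map Prod.snd) := by
              rw [List.map_cons]
              exact List.suffix_cons _ _

lemma shorten {G : WDigraph V} (hnn : G.Nonneg) {v : V} :
    ∀ {l : List (V × V)} {u : V}, IsWalkFrom G u v l →
    ∃ l', IsWalkFrom G u v l' ∧ (l'.map G.w).sum ≤ (l.map G.w).sum ∧
      l'.length ≤ l.length ∧ (u :: l'.map Prod.snd).Nodup := by
  intro l
  induction l with
  | nil =>
      intro u h
      exact ⟨[], h, le_rfl, le_rfl, by simp⟩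
  | cons e t ih =>
      intro u h
      obtain ⟨he, h1e, ht⟩ := h
      obtain ⟨l', hw', hs', hl', hnd'⟩ := ih ht
      by_cases hu : u ∈ e.2 :: l'.map Prod.snd
      · obtain ⟨p, s, hps, hws, hsuf⟩ := walk_suffix hw' hu
        refine ⟨s, hws, ?_, ?_, hsuf.sublist.nodup hnd'⟩
        · have hp : 0 ≤ (p.map G.w).sum := List.sum_nonneg (by
            intro x hx
            obtain ⟨y, _, rfl⟩ := List.mem_map.1 hx
            exact hnn y)
          have hse : 0 ≤ G.w e := hnn e
          have : (s.map G.w).sum ≤ (l'.map G.w).sum := by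
            rw [hps, List.map_append, List.sum_append]; linarith
          simp only [List.map_cons, List.sum_cons]
          linarith
        · have : s.length ≤ l'.length := by rw [hps]; simp
          simp only [List.length_cons]; omega
      · refine ⟨e :: l', ⟨he, h1e, hw'⟩, ?_, by simpa using hl', ?_⟩
        · simp only [List.map_cons, List.sum_cons]; linarith
        · rw [List.map_cons, List.nodup_cons]
          exact ⟨hu, hnd'⟩

lemma walk_sum_nonneg {G : WDigraph V} (hnn : G.Nonneg) (l : List (V × V)) :
    0 ≤ (l.map G.w).sum :=
  List.sum_nonneg (by rintro x hx; obtain ⟨y, _, rfl⟩ := List.mem_map.1 hx; exact hnn y)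

-- ## attainment (minimal-hop shortest walks)
lemma exists_spath [Fintype V] {G : WDigraph V} (hnn : G.Nonneg) {u v : V}
    (h : G.Reachable u v) :
    ∃ l, IsWalkFrom G u v l ∧ walkWeight G l = G.dist u v ∧
      ∀ l', IsWalkFrom G u v l' → walkWeight G l' = G.dist u v → l.length ≤ l'.length := by
  classical
  -- the finite candidate set
  have hfin : {l : List (V × V) | IsWalkFrom G u v l ∧ (u :: l.map Prod.snd).Nodup}.Finite := by
    apply (List.finite_length_le (V × V) (Fintype.card V)).subset
    intro l ⟨_, hnd⟩
    have := hnd.length_le_card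
    simp only [Set.mem_setOf_eq, List.length_cons, List.length_map] at *
    omega
  set C := hfin.toFinset with hC
  have hne : C.Nonempty := by
    obtain ⟨l, hl⟩ := h
    obtain ⟨l', hl', _, _, hnd⟩ := shorten hnn hl
    exact ⟨l', by rw [hC, Set.Finite.mem_toFinset]; exact ⟨hl', hnd⟩⟩
  -- minimize weight
  obtain ⟨l₀, hl₀C, hl₀min⟩ := C.exists_min_image (walkWeight G) hne
  rw [hC, Set.Finite.mem_toFinset] at hl₀C
  have hdist : walkWeight G l₀ = G.dist u v := by
    refine le_antisymm ?_ (dist_le_walkWeight hl₀C.1)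
    refine le_iInf₂ fun l hl => ?_
    obtain ⟨l', hl', hs', _, hnd⟩ := shorten hnn hl
    calc walkWeight G l₀ ≤ walkWeight G l' :=
          hl₀min l' (by rw [hC, Set.Finite.mem_toFinset]; exact ⟨hl', hnd⟩)
    _ ≤ walkWeight G l := ENNReal.ofReal_le_ofReal hs'
  -- minimize length among shortest
  obtain ⟨l₁, hl₁C, hl₁min⟩ :=
    (C.filter (fun l => walkWeight G l = G.dist u v)).exists_min_image List.length
      ⟨l₀, by rw [Finset.mem_filter, hC, Set.Finite.mem_toFinset]; exact ⟨⟨hl₀C.1, hl₀C.2⟩, by simpa using hdist⟩⟩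
  rw [Finset.mem_filter] at hl₁C
  obtain ⟨hl₁C, hl₁d⟩ := hl₁C
  rw [hC, Set.Finite.mem_toFinset] at hl₁C
  refine ⟨l₁, hl₁C.1, hl₁d, fun l' hw' hd' => ?_⟩
  obtain ⟨l'', hw'', hs'', hlen'', hnd''⟩ := shorten hnn hw'
  have hd'' : walkWeight G l'' = G.dist u v := by
    refine le_antisymm ?_ (dist_le_walkWeight hw'')
    calc walkWeight G l'' ≤ walkWeight G l' := ENNReal.ofReal_le_ofReal hs''
    _ = G.dist u v := hd'
  have : l₁.length ≤ l''.length := by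
    refine hl₁min l'' ?_
    rw [Finset.mem_filter, hC, Set.Finite.mem_toFinset]
    exact ⟨⟨hw'', hnd''⟩, hd''⟩
  omega

-- ## triangle inequality
lemma dist_triangle [Fintype V] {G : WDigraph V} (hnn : G.Nonneg) (u v w : V) :
    G.dist u w ≤ G.dist u v + G.dist v w := by
  by_cases h1 : G.dist u v = ⊤
  · rw [h1]; simp
  by_cases h2 : G.dist v w = ⊤
  · rw [h2]; simp
  obtain ⟨l₁, hw₁, hd₁, _⟩ := exists_spath hnn (reachable_of_dist_ne_top h1)
  obtain ⟨l₂, hw₂, hd₂, _⟩ := exists_spath hnn (reachable_of_dist_ne_top h2)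
  calc G.dist u w ≤ walkWeight G (l₁ ++ l₂) := dist_le_walkWeight (walk_append hw₁ hw₂)
  _ ≤ walkWeight G l₁ + walkWeight G l₂ := walkWeight_append_le G l₁ l₂
  _ = G.dist u v + G.dist v w := by rw [hd₁, hd₂]

-- ## transfer between graphs with same weights
lemma walk_transfer {G H : WDigraph V} (he : H.edges ⊆ G.edges) {u v : V} {l : List (V × V)}
    (h : IsWalkFrom H u v l) : IsWalkFrom G u v l := by
  induction l generalizing u with
  | nil => exact h
  | cons e t ih =>
      obtain ⟨hm, h1, ht⟩ := h
      exact ⟨he hm, h1, ih ht⟩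

lemma dist_le_of_subset {G H : WDigraph V} (hw : H.w = G.w) (he : H.edges ⊆ G.edges)
    (u v : V) : G.dist u v ≤ H.dist u v := by
  refine le_iInf₂ fun l hl => ?_
  have := dist_le_walkWeight (walk_transfer he hl)
  rwa [walkWeight, ← hw, ← walkWeight] at this

-- ## shortest path trees
open Classical in
noncomputable def spath [Fintype V] (G : WDigraph V) (u v : V) : List (V × V) :=
  if h : ∃ l, IsWalkFrom G u v l ∧ walkWeight G l = G.dist u v ∧
      ∀ l', IsWalkFrom G u v l' → walkWeight G l' = G.dist u v → l.length ≤ l'.length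
  then h.choose else []

lemma spath_spec [Fintype V] {G : WDigraph V} (hnn : G.Nonneg) {u v : V}
    (h : G.Reachable u v) :
    IsWalkFrom G u v (spath G u v) ∧ walkWeight G (spath G u v) = G.dist u v ∧
      ∀ l', IsWalkFrom G u v l' → walkWeight G l' = G.dist u v →
        (spath G u v).length ≤ l'.length := by
  rw [spath]
  rw [dif_pos (exists_spath hnn h)]
  exact (exists_spath hnn h).choose_spec

noncomputable def lastE [Fintype V] (G : WDigraph V) (u v : V) : V × V :=
  (spath G u v).getLastD (v, v)

lemma walk_concat_split {G : WDigraph V} {v : V} {e : V × V} :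
    ∀ {l₁ : List (V × V)} {u : V}, IsWalkFrom G u v (l₁ ++ [e]) →
      IsWalkFrom G u e.1 l₁ ∧ e ∈ G.edges ∧ e.2 = v := by
  intro l₁
  induction l₁ with
  | nil =>
      intro u h
      obtain ⟨he, h1, h2⟩ := h
      exact ⟨h1.symm, he, h2⟩
  | cons f t ih =>
      intro u h
      obtain ⟨hf, h1, ht⟩ := h
      obtain ⟨hw, he, h2⟩ := ih ht
      exact ⟨⟨hf, h1, hw⟩, he, h2⟩

lemma spt [Fintype V] {G : WDigraph V} (hnn : G.Nonneg) (a : V) (E : Finset (V × V))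
    (hE : ∀ v, G.Reachable a v → v ≠ a → lastE G a v ∈ E) :
    ∀ v, G.Reachable a v → (G.sub E).dist a v ≤ G.dist a v := by
  suffices H : ∀ N : ℕ, ∀ v, (spath G a v).length ≤ N → G.Reachable a v →
      (G.sub E).dist a v ≤ G.dist a v from fun v hv => H _ v le_rfl hv
  intro N
  induction N with
  | zero =>
      intro v hlen hv
      obtain ⟨hwalk, hwt, -⟩ := spath_spec hnn hv
      have hnil : spath G a v = [] := List.length_eq_zero_iff.1 (Nat.le_zero.1 hlen)
      have hav : a = v := by rw [hnil] at hwalk; exact hwalk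
      subst hav
      rw [dist_self]
      exact zero_le
  | succ N ih =>
      intro v hlen hv
      by_cases hav : a = v
      · subst hav; rw [dist_self]; exact zero_le
      obtain ⟨hwalk, hwt, hmin⟩ := spath_spec hnn hv
      set l := spath G a v with hl
      have hlne : l ≠ [] := by
        intro h0
        rw [h0] at hwalk
        exact hav hwalk
      set e := l.getLast hlne with he
      set p := l.dropLast with hp
      have hsplit0 : p ++ [e] = l := List.dropLast_append_getLast hlne
      have hsplit : IsWalkFrom G a e.1 p ∧ e ∈ G.edges ∧ e.2 = v := by
        apply walk_concat_split
        rw [hsplit0]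
        exact hwalk
      obtain ⟨hpw, heE, he2⟩ := hsplit
      set u := e.1 with hu
      have hur : G.Reachable a u := ⟨p, hpw⟩
      have hsum : (l.map G.w).sum = (p.map G.w).sum + G.w e := by
        rw [← hsplit0]; simp
      -- p is a shortest walk from a to u
      have hdle : G.dist a u ≤ ENNReal.ofReal ((p.map G.w).sum) := dist_le_walkWeight hpw
      have hgle : ENNReal.ofReal ((p.map G.w).sum) ≤ G.dist a u := by
        obtain ⟨q, hqw, hqd, -⟩ := exists_spath hnn hur
        have hq1 : G.dist a v ≤ walkWeight G q + ENNReal.ofReal (G.w e) := by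
          have hwalk2 : IsWalkFrom G a v (q ++ [e]) :=
            walk_append hqw ⟨heE, rfl, he2⟩
          calc G.dist a v ≤ walkWeight G (q ++ [e]) := dist_le_walkWeight hwalk2
          _ ≤ walkWeight G q + walkWeight G [e] := walkWeight_append_le G q [e]
          _ = walkWeight G q + ENNReal.ofReal (G.w e) := by simp [walkWeight]
        have hq2 : ENNReal.ofReal ((p.map G.w).sum) + ENNReal.ofReal (G.w e) ≤
            G.dist a u + ENNReal.ofReal (G.w e) := by
          calc ENNReal.ofReal ((p.map G.w).sum) + ENNReal.ofReal (G.w e)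
              = ENNReal.ofReal ((p.map G.w).sum + G.w e) :=
                (ENNReal.ofReal_add (walk_sum_nonneg hnn p) (hnn e)).symm
          _ = ENNReal.ofReal ((l.map G.w).sum) := by rw [hsum]
          _ = G.dist a v := hwt
          _ ≤ walkWeight G q + ENNReal.ofReal (G.w e) := hq1
          _ = G.dist a u + ENNReal.ofReal (G.w e) := by rw [hqd]
        exact (ENNReal.add_le_add_iff_right ENNReal.ofReal_ne_top).1 hq2
      have hdeq : G.dist a u = walkWeight G p := le_antisymm hdle hgle
      -- minimal-hop property
      have hplen : (spath G a u).length ≤ N := by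
        have h1 : (spath G a u).length ≤ p.length :=
          (spath_spec hnn hur).2.2 p hpw hdeq.symm
        have h2 : p.length + 1 = l.length := by rw [← hsplit0]; simp
        omega
      have hIH : (G.sub E).dist a u ≤ G.dist a u := ih u hplen hur
      -- extend in the subgraph
      have hnnE : (G.sub E).Nonneg := hnn
      have hsubr : (G.sub E).Reachable a u := by
        apply reachable_of_dist_ne_top
        intro htop
        rw [htop, hdeq, walkWeight] at hIH
        exact (ENNReal.ofReal_ne_top (top_le_iff.1 hIH)).elim
      obtain ⟨q', hq'w, hq'd, -⟩ := exists_spath hnnE hsubr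
      have heE' : e ∈ E := by
        have : lastE G a v = e := by
          rw [lastE, ← hl, List.getLastD_eq_getLast?, List.getLast?_eq_getLast hlne]
          rfl
        rw [← this]
        exact hE v hv (fun h => hav h.symm)
      have hwalkE : IsWalkFrom (G.sub E) a v (q' ++ [e]) :=
        walk_append hq'w ⟨heE', rfl, he2⟩
      calc (G.sub E).dist a v ≤ walkWeight (G.sub E) (q' ++ [e]) := dist_le_walkWeight hwalkE
      _ ≤ walkWeight (G.sub E) q' + walkWeight (G.sub E) [e] := walkWeight_append_le _ _ _
      _ = (G.sub E).dist a u + ENNReal.ofReal (G.w e) := by rw [← hq'd]; simp [walkWeight, WDigraph.sub]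
      _ ≤ G.dist a u + ENNReal.ofReal (G.w e) := add_le_add_left hIH _
      _ = ENNReal.ofReal ((p.map G.w).sum) + ENNReal.ofReal (G.w e) := by
            rw [hdeq]; rfl
      _ = ENNReal.ofReal ((l.map G.w).sum) := by
            rw [← ENNReal.ofReal_add (walk_sum_nonneg hnn p) (hnn e), hsum]
      _ = G.dist a v := hwt

-- ## choosing the m nearest vertices
lemma exists_nearest [Fintype V] [DecidableEq V] (f : V → ℝ≥0∞) :
    ∀ m : ℕ, m ≤ Fintype.card V →
      ∃ B : Finset V, B.card = m ∧ ∀ x ∈ B, ∀ y ∉ B, f x ≤ f y := by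
  intro m
  induction m with
  | zero => exact fun _ => ⟨∅, rfl, by simp⟩
  | succ m ih =>
      intro hm
      obtain ⟨B, hcard, hB⟩ := ih (Nat.le_of_succ_le hm)
      have hne : (Bᶜ : Finset V).Nonempty := by
        rw [← Finset.card_pos, Finset.card_compl, hcard]
        omega
      obtain ⟨y₀, hy₀, hy₀min⟩ := (Bᶜ : Finset V).exists_min_image f hne
      rw [Finset.mem_compl] at hy₀
      refine ⟨insert y₀ B, ?_, ?_⟩
      · rw [Finset.card_insert_of_notMem hy₀, hcard]
      · intro x hx y hy
        have hyB : y ∉ B := fun h => hy (Finset.mem_insert_of_mem h)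
        rcases Finset.mem_insert.1 hx with rfl | hxB
        · exact hy₀min y (Finset.mem_compl.2 hyB)
        · exact hB x hxB y hyB

-- ## greedy net construction
lemma greedy_aux [Fintype V] [DecidableEq V] (B : V → Finset V) (r : V → ℝ≥0∞)
    (hB : ∀ v, (B v).Nonempty) :
    ∀ N : ℕ, ∀ U : Finset V, U.card ≤ N → ∃ A : Finset V,
      A ⊆ U ∧
      (∀ a ∈ A, ∀ b ∈ A, a ≠ b → Disjoint (B a) (B b)) ∧
      (∀ v ∈ U, ∃ a ∈ A, (B a ∩ B v).Nonempty ∧ r a ≤ r v) := by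
  classical
  intro N
  induction N with
  | zero =>
      intro U hU
      have : U = ∅ := Finset.card_eq_zero.1 (Nat.le_zero.1 hU)
      subst this
      exact ⟨∅, Finset.Subset.refl _, by simp, by simp⟩
  | succ N ih =>
      intro U hU
      rcases U.eq_empty_or_nonempty with rfl | hUne
      · exact ⟨∅, Finset.Subset.refl _, by simp, by simp⟩
      obtain ⟨u, huU, humin⟩ := U.exists_min_image r hUne
      set U' := U.filter (fun v => ¬(B v ∩ B u).Nonempty) with hU'
      have huu : (B u ∩ B u).Nonempty := by
        rw [Finset.inter_self]; exact hB u
      have hu' : u ∉ U' := by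
        rw [hU', Finset.mem_filter]
        exact fun h => h.2 huu
      have hcard : U'.card ≤ N := by
        have hsub : U' ⊆ U.erase u := fun x hx =>
          Finset.mem_erase.2 ⟨fun hxu => hu' (hxu ▸ hx), Finset.filter_subset _ _ hx⟩
        have := Finset.card_le_card hsub
        have := Finset.card_erase_of_mem huU
        omega
      obtain ⟨A', hA'sub, hA'disj, hA'cov⟩ := ih U' hcard
      have hA'U : ∀ a ∈ A', ¬(B a ∩ B u).Nonempty := fun a ha =>
        (Finset.mem_filter.1 (hA'sub ha)).2
      refine ⟨insert u A', ?_, ?_, ?_⟩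
      · intro x hx
        rcases Finset.mem_insert.1 hx with rfl | hx
        · exact huU
        · exact Finset.filter_subset _ _ (hA'sub hx)
      · intro a ha b hb hab
        have key : ∀ c ∈ A', Disjoint (B c) (B u) := by
          intro c hc
          rw [Finset.disjoint_iff_inter_eq_empty]
          exact Finset.not_nonempty_iff_eq_empty.1 (hA'U c hc)
        rcases Finset.mem_insert.1 ha with ha1 | ha1 <;> rcases Finset.mem_insert.1 hb with hb1 | hb1
        · exact absurd (ha1.trans hb1.symm) hab
        · rw [ha1]; exact (key b hb1).symm
        · rw [hb1]; exact key a ha1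
        · exact hA'disj a ha1 b hb1 hab
      · intro v hv
        by_cases hvc : (B v ∩ B u).Nonempty
        · refine ⟨u, Finset.mem_insert_self _ _, ?_, humin v hv⟩
          rwa [Finset.inter_comm]
        · have hv' : v ∈ U' := Finset.mem_filter.2 ⟨hv, hvc⟩
          obtain ⟨a, ha, hcov⟩ := hA'cov v hv'
          exact ⟨a, Finset.mem_insert_of_mem ha, hcov⟩

lemma greedy [Fintype V] [DecidableEq V] (B : V → Finset V) (r : V → ℝ≥0∞) (m : ℕ)
    (hm : 1 ≤ m) (hB : ∀ v, m ≤ (B v).card) :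
    ∃ A : Finset V, A.card * m ≤ Fintype.card V ∧
      ∀ v, ∃ a ∈ A, (B a ∩ B v).Nonempty ∧ r a ≤ r v := by
  obtain ⟨A, -, hdisj, hcov⟩ := greedy_aux B r
    (fun v => Finset.card_pos.1 (hm.trans (hB v))) Finset.univ.card Finset.univ le_rfl
  refine ⟨A, ?_, fun v => hcov v (Finset.mem_univ v)⟩
  calc A.card * m = ∑ _a ∈ A, m := by rw [Finset.sum_const, smul_eq_mul, mul_comm]
  _ ≤ ∑ a ∈ A, (B a).card := Finset.sum_le_sum (fun a _ => hB a)
  _ = (A.biUnion B).card := (Finset.card_biUnion hdisj).symm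
  _ ≤ Fintype.card V := by rw [← Finset.card_univ]; exact Finset.card_le_card (Finset.subset_univ _)

-- ## last edge of a shortest path
lemma lastE_mem_T [Fintype V] {G : WDigraph V} (hnn : G.Nonneg) {a v : V}
    (hr : G.Reachable a v) (hne : v ≠ a) :
    spath G a v ≠ [] ∧ lastE G a v ∈ G.edges := by
  obtain ⟨hwalk, -, -⟩ := spath_spec hnn hr
  have hlne : spath G a v ≠ [] := by
    intro h0; rw [h0] at hwalk; exact hne hwalk.symm
  constructor
  · exact hlne
  · have : lastE G a v = (spath G a v).getLast hlne := by
      rw [lastE, List.getLastD_eq_getLast?, List.getLast?_eq_getLast hlne]; rfl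
    rw [this]
    exact walk_mem_edges hwalk _ (List.getLast_mem hlne)

-- ## the master construction
lemma master [Fintype V] [DecidableEq V] (G : WDigraph V) (hsym : G.Symmetric)
    (hnn : G.Nonneg) (m : ℕ) (hm : 1 ≤ m) (hmn : m ≤ Fintype.card V) :
    ∃ Estar : Finset (V × V), Estar ⊆ G.edges ∧ (∀ e ∈ Estar, (e.2, e.1) ∈ Estar) ∧
      Estar.card * m ≤ 2 * Fintype.card V * Fintype.card V ∧
      ∀ v : V, ∃ S : Finset V, S.card = Fintype.card V - m ∧
        (∀ x ∈ S, ∀ y ∉ S, G.dist v y ≤ G.dist v x) ∧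
        ∀ w ∈ S, (G.sub Estar).dist v w ≤ 5 * G.dist v w := by
  classical
  -- choose the m nearest vertices to each v
  have hBex : ∀ v : V, ∃ B : Finset V, B.card = m ∧
      ∀ x ∈ B, ∀ y ∉ B, G.dist v x ≤ G.dist v y :=
    fun v => exists_nearest (G.dist v) m hmn
  choose B hBcard hBnear using hBex
  set r : V → ℝ≥0∞ := fun v => (B v).sup (G.dist v) with hr
  obtain ⟨A, hAcard, hAcov⟩ := greedy B r m hm (fun v => (hBcard v).ge)
  -- shortest path trees from the centers
  set T : V → Finset (V × V) := fun a =>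
    (Finset.univ.filter (fun v => G.Reachable a v ∧ v ≠ a)).image (lastE G a) with hT
  have hTsub : ∀ a, T a ⊆ G.edges := by
    intro a e he
    rw [hT] at he
    obtain ⟨v, hv, rfl⟩ := Finset.mem_image.1 he
    rw [Finset.mem_filter] at hv
    exact (lastE_mem_T hnn hv.2.1 hv.2.2).2
  set Estar : Finset (V × V) := A.biUnion (fun a => T a ∪ (T a).image Prod.swap) with hEstar
  have hEsub : Estar ⊆ G.edges := by
    intro e he
    rw [hEstar] at he
    obtain ⟨a, -, he⟩ := Finset.mem_biUnion.1 he
    rcases Finset.mem_union.1 he with he | he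
    · exact hTsub a he
    · obtain ⟨f, hf, rfl⟩ := Finset.mem_image.1 he
      exact (hsym f (hTsub a hf)).1
  have hEswap : ∀ e ∈ Estar, (e.2, e.1) ∈ Estar := by
    intro e he
    rw [hEstar] at he ⊢
    obtain ⟨a, haA, he⟩ := Finset.mem_biUnion.1 he
    refine Finset.mem_biUnion.2 ⟨a, haA, ?_⟩
    rcases Finset.mem_union.1 he with he | he
    · exact Finset.mem_union_right _ (Finset.mem_image.2 ⟨e, he, rfl⟩)
    · obtain ⟨f, hf, rfl⟩ := Finset.mem_image.1 he
      exact Finset.mem_union_left _ hf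
  have hEcard : Estar.card * m ≤ 2 * Fintype.card V * Fintype.card V := by
    have h1 : Estar.card ≤ 2 * Fintype.card V * A.card := by
      calc Estar.card ≤ ∑ a ∈ A, (T a ∪ (T a).image Prod.swap).card := Finset.card_biUnion_le
      _ ≤ ∑ _a ∈ A, 2 * Fintype.card V := by
          refine Finset.sum_le_sum fun a _ => ?_
          have hTa : (T a).card ≤ Fintype.card V := by
            rw [hT]
            calc ((Finset.univ.filter (fun v => G.Reachable a v ∧ v ≠ a)).image (lastE G a)).card
                ≤ (Finset.univ.filter (fun v => G.Reachable a v ∧ v ≠ a)).card :=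
                  Finset.card_image_le
            _ ≤ Finset.univ.card := Finset.card_filter_le _ _
            _ = Fintype.card V := Finset.card_univ
          have := Finset.card_image_le (s := T a) (f := Prod.swap)
          have := Finset.card_union_le (T a) ((T a).image Prod.swap)
          omega
      _ = 2 * Fintype.card V * A.card := by rw [Finset.sum_const, smul_eq_mul, mul_comm]
    calc Estar.card * m ≤ 2 * Fintype.card V * A.card * m := Nat.mul_le_mul_right m h1
    _ = 2 * Fintype.card V * (A.card * m) := by ring
    _ ≤ 2 * Fintype.card V * Fintype.card V := Nat.mul_le_mul_left _ hAcard
  refine ⟨Estar, hEsub, hEswap, hEcard, ?_⟩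
  -- the slack spanner property
  intro v
  refine ⟨Finset.univ \ B v, ?_, ?_, ?_⟩
  · rw [Finset.card_sdiff_of_subset (Finset.subset_univ _), Finset.card_univ, hBcard]
  · intro x hx y hy
    have hxB : x ∉ B v := (Finset.mem_sdiff.1 hx).2
    have hyB : y ∈ B v := by
      by_contra hyB
      exact hy (Finset.mem_sdiff.2 ⟨Finset.mem_univ y, hyB⟩)
    exact hBnear v y hyB x hxB
  · intro w hw
    have hwB : w ∉ B v := (Finset.mem_sdiff.1 hw).2
    set d := G.dist v w with hd
    by_cases hdt : d = ⊤
    · rw [hdt]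
      simp
    -- r v ≤ d
    have hrv : r v ≤ d := Finset.sup_le fun z hz => hBnear v z hz w hwB
    obtain ⟨a, haA, ⟨z, hz⟩, hra⟩ := hAcov v
    rw [Finset.mem_inter] at hz
    -- dist v a ≤ 2 d
    have hva : G.dist v a ≤ d + d := by
      calc G.dist v a ≤ G.dist v z + G.dist z a := dist_triangle hnn v z a
      _ = G.dist v z + G.dist a z := by rw [dist_symm hsym z a]
      _ ≤ r v + r a := add_le_add (Finset.le_sup hz.2) (Finset.le_sup hz.1)
      _ ≤ r v + r v := add_le_add_right hra _
      _ ≤ d + d := add_le_add hrv hrv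
    have hav : G.dist a v ≤ d + d := (dist_symm hsym a v) ▸ hva
    have havt : G.dist a v ≠ ⊤ := by
      intro h
      rw [h, top_le_iff] at hav
      exact hdt (by
        rcases ENNReal.add_eq_top.1 hav with h' | h' <;> exact h')
    have hraw : G.Reachable a v := reachable_of_dist_ne_top havt
    have haw : G.dist a w ≤ (d + d) + d := by
      calc G.dist a w ≤ G.dist a v + G.dist v w := dist_triangle hnn a v w
      _ ≤ (d + d) + d := add_le_add_left hav _
    have hawt : G.dist a w ≠ ⊤ := by
      intro h
      rw [h, top_le_iff] at haw
      rcases ENNReal.add_eq_top.1 haw with h' | h'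
      · rcases ENNReal.add_eq_top.1 h' with h'' | h'' <;> exact hdt h''
      · exact hdt h'
    have hraw2 : G.Reachable a w := reachable_of_dist_ne_top hawt
    -- the shortest path tree of a is in Estar
    have hspt : ∀ x, G.Reachable a x → (G.sub Estar).dist a x ≤ G.dist a x := by
      refine spt hnn a Estar ?_
      intro x hrx hxa
      rw [hEstar]
      refine Finset.mem_biUnion.2 ⟨a, haA, Finset.mem_union_left _ ?_⟩
      rw [hT]
      exact Finset.mem_image.2 ⟨x, Finset.mem_filter.2 ⟨Finset.mem_univ x, hrx, hxa⟩, rfl⟩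
    -- the subgraph is symmetric
    have hsubsym : (G.sub Estar).Symmetric := by
      intro e he
      exact ⟨hEswap e he, (hsym e (hEsub he)).2⟩
    have hnnE : (G.sub Estar).Nonneg := hnn
    calc (G.sub Estar).dist v w
        ≤ (G.sub Estar).dist v a + (G.sub Estar).dist a w := dist_triangle hnnE v a w
    _ = (G.sub Estar).dist a v + (G.sub Estar).dist a w := by rw [dist_symm hsubsym v a]
    _ ≤ G.dist a v + G.dist a w := add_le_add (hspt v hraw) (hspt w hraw2)
    _ ≤ (d + d) + ((d + d) + d) := add_le_add hav haw
    _ = 5 * d := by ring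

end Hopsets

open Hopsets in
/-- For every `ε ∈ (0,1)`, integer `k ≥ 1` and `δ > 0`, for all large
enough `n`, every `n`-vertex undirected graph with nonnegative polynomially bounded
weights admits an `ε`-slack `(12k−1+δ)`-spanner with at most
`n^{1+δ} + (1/ε)^{1+1/k}·n^δ` edges. -/
theorem stmt_15 (ε : ℝ) (hε : ε ∈ Set.Ioo (0 : ℝ) 1) (k : ℕ) (hk : 1 ≤ k)
    (δ : ℝ) (hδ : 0 < δ) (q : ℕ) :
    ∃ n0 : ℕ, ∀ n ≥ n0, ∀ G : WDigraph (Fin n),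
      G.Symmetric → G.Nonneg → G.PolyBounded q →
      ∃ Estar ⊆ G.edges, (∀ e ∈ Estar, (e.2, e.1) ∈ Estar) ∧
        (Estar.card : ℝ) ≤ (n : ℝ) ^ (1 + δ) + (1 / ε) ^ (1 + 1 / (k : ℝ)) * (n : ℝ) ^ δ ∧
        IsSlackSpanner G Estar ε (12 * (k : ℝ) - 1 + δ) := by
  obtain ⟨hε0, hε1⟩ := hε
  refine ⟨⌈max (2 / ε) ((4 / ε) ^ (1 / δ))⌉₊ + 1, fun n hn G hsym hnn _ => ?_⟩
  have hnM : max (2 / ε) ((4 / ε) ^ (1 / δ)) ≤ (n : ℝ) := by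
    calc max (2 / ε) ((4 / ε) ^ (1 / δ)) ≤ (⌈max (2 / ε) ((4 / ε) ^ (1 / δ))⌉₊ : ℝ) := Nat.le_ceil _
    _ ≤ (n : ℝ) := by exact_mod_cast Nat.le_of_succ_le hn
  have hn1 : 1 ≤ n := le_trans (Nat.le_add_left 1 _) hn
  have hnR : (1 : ℝ) ≤ (n : ℝ) := by exact_mod_cast hn1
  have hnpos : (0 : ℝ) < (n : ℝ) := by linarith
  -- ε n ≥ 2
  have hεn2 : (2 : ℝ) ≤ ε * n := by
    have h1 : 2 / ε ≤ (n : ℝ) := le_trans (le_max_left _ _) hnM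
    calc (2 : ℝ) = ε * (2 / ε) := by field_simp
    _ ≤ ε * n := by nlinarith
  -- n ^ δ ≥ 4 / ε
  have hnd : 4 / ε ≤ (n : ℝ) ^ δ := by
    have h1 : (4 / ε) ^ (1 / δ) ≤ (n : ℝ) := le_trans (le_max_right _ _) hnM
    have h2 : (0 : ℝ) ≤ 4 / ε := by positivity
    calc 4 / ε = ((4 / ε) ^ (1 / δ)) ^ δ := by
          rw [← Real.rpow_mul h2, one_div_mul_cancel hδ.ne', Real.rpow_one]
    _ ≤ (n : ℝ) ^ δ := Real.rpow_le_rpow (Real.rpow_nonneg h2 _) h1 hδ.le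
  -- the parameter m
  set m : ℕ := ⌊ε * n⌋₊ with hmdef
  have hm1 : 1 ≤ m := Nat.le_floor (by push_cast; linarith)
  have hmεn : (m : ℝ) ≤ ε * n := Nat.floor_le (by linarith)
  have hmn : m ≤ n := by
    have : (m : ℝ) ≤ (n : ℝ) := by nlinarith
    exact_mod_cast this
  have hmhalf : ε * n / 2 ≤ (m : ℝ) := by
    have := Nat.sub_one_lt_floor (ε * n)
    rw [← hmdef] at this
    linarith
  have hmpos : (0 : ℝ) < (m : ℝ) := by
    have : (1 : ℝ) ≤ (m : ℝ) := by exact_mod_cast hm1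
    linarith
  -- apply the master construction
  have hcard : Fintype.card (Fin n) = n := Fintype.card_fin n
  obtain ⟨Estar, hEsub, hEswap, hEcard, hES⟩ :=
    master G hsym hnn m hm1 (by rw [hcard]; exact hmn)
  rw [hcard] at hEcard
  refine ⟨Estar, hEsub, hEswap, ?_, ?_⟩
  · -- cardinality bound
    have h1 : (Estar.card : ℝ) * m ≤ 2 * n * n := by exact_mod_cast hEcard
    have h2 : (Estar.card : ℝ) ≤ 2 * n * n / m := by
      rw [le_div_iff₀ hmpos]; exact h1
    have h3 : 2 * (n : ℝ) * n / m ≤ 4 * n / ε := by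
      rw [div_le_div_iff₀ hmpos (by positivity)]
      nlinarith [mul_le_mul_of_nonneg_left hmhalf (by positivity : (0:ℝ) ≤ 4 * n)]
    have h4 : 4 * (n : ℝ) / ε ≤ (n : ℝ) ^ (1 + δ) := by
      rw [Real.rpow_add hnpos, Real.rpow_one]
      calc 4 * (n : ℝ) / ε = (4 / ε) * n := by ring
      _ ≤ (n : ℝ) ^ δ * n := by nlinarith
      _ = (n : ℝ) * (n : ℝ) ^ δ := by ring
    have h5 : (0 : ℝ) ≤ (1 / ε) ^ (1 + 1 / (k : ℝ)) * (n : ℝ) ^ δ := by positivity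
    linarith
  · -- slack spanner
    intro v
    obtain ⟨S, hScard, hSord, hSdist⟩ := hES v
    rw [hcard] at hScard
    refine ⟨S, ?_, hSord, ?_⟩
    · rw [hScard, hcard]
      have hc : ((n - m : ℕ) : ℝ) = (n : ℝ) - m := by
        rw [Nat.cast_sub hmn]
      rw [hc]
      nlinarith
    · intro w hw
      refine le_trans (hSdist w hw) ?_
      refine mul_le_mul_left ?_ _
      have h5 : (5 : ℝ≥0∞) = ENNReal.ofReal 5 := by
        rw [ENNReal.ofReal_ofNat]
      rw [h5]
      refine ENNReal.ofReal_le_ofReal ?_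
      have hkR : (1 : ℝ) ≤ (k : ℝ) := by exact_mod_cast hk
      linarith
end

section
/- For every δ > 0 and every constant C > 0 there exists n_0 such that for every n ≥ n_0 there exists an n-vertex undirected graph G with nonnegative edge weights with the following property: every (β,0)-hopset H for G (i.e., an exact hopset: dist^{(β)}_{G∪H}(u,v) = dist_G(u,v) for all u,v) with |H| ≤ C·n satisfies β ≥ n^{1/3−δ}. -/
open scoped ENNReal

namespace Stmt16
open Hopsets

variable {V : Type}

lemma walkWeight_nil (G : WDigraph V) : walkWeight G ([] : List (V × V)) = 0 := by
  simp [walkWeight]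

lemma walkWeight_cons (G : WDigraph V) (hw : G.Nonneg) (e : V × V) (l : List (V × V)) :
    walkWeight G (e :: l) = ENNReal.ofReal (G.w e) + walkWeight G l := by
  have h1 : (0:ℝ) ≤ G.w e := hw e
  have h2 : (0:ℝ) ≤ (l.map G.w).sum := List.sum_nonneg (by
    intro x hx; obtain ⟨a, _, rfl⟩ := List.mem_map.mp hx; exact hw a)
  simp [walkWeight, ENNReal.ofReal_add h1 h2]

lemma isWalkFrom_append {G : WDigraph V} {u m v : V} {l₁ l₂ : List (V × V)}
    (h1 : IsWalkFrom G u m l₁) (h2 : IsWalkFrom G m v l₂) :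
    IsWalkFrom G u v (l₁ ++ l₂) := by
  induction l₁ generalizing u with
  | nil => cases h1; simpa using h2
  | cons e t ih =>
    obtain ⟨he, h1e, hrest⟩ := h1
    exact ⟨he, h1e, ih hrest⟩

lemma walkWeight_append (G : WDigraph V) (hw : G.Nonneg) (l₁ l₂ : List (V × V)) :
    walkWeight G (l₁ ++ l₂) = walkWeight G l₁ + walkWeight G l₂ := by
  induction l₁ with
  | nil => simp [walkWeight_nil]
  | cons e t ih => simp [walkWeight_cons G hw, ih, add_assoc]

lemma dist_le_walkWeight {G : WDigraph V} {u v : V} {l : List (V × V)}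
    (h : IsWalkFrom G u v l) : G.dist u v ≤ walkWeight G l := by
  exact iInf₂_le l h

lemma hopDist_le_walkWeight {G : WDigraph V} {β : ℕ} {u v : V} {l : List (V × V)}
    (h : IsWalkFrom G u v l) (hl : l.length ≤ β) : G.hopDist β u v ≤ walkWeight G l := by
  exact iInf₂_le l ⟨h, hl⟩

lemma dist_self (G : WDigraph V) (u : V) : G.dist u u = 0 := by
  have := dist_le_walkWeight (G := G) (u := u) (v := u) (l := []) rfl
  simpa [walkWeight_nil] using (le_antisymm (by simpa [walkWeight_nil] using this) zero_le)

lemma dist_eq_sInf (G : WDigraph V) (u v : V) :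
    G.dist u v = sInf (walkWeight G '' {l | IsWalkFrom G u v l}) := by
  rw [WDigraph.dist, sInf_image]

lemma hopDist_eq_sInf (G : WDigraph V) (β : ℕ) (u v : V) :
    G.hopDist β u v = sInf (walkWeight G '' {l | IsWalkFrom G u v l ∧ l.length ≤ β}) := by
  rw [WDigraph.hopDist, sInf_image]

lemma sInf_mem_of_nat {S : Set ℝ≥0∞} (h1 : S ⊆ Set.range ((↑·) : ℕ → ℝ≥0∞))
    (h2 : sInf S ≠ ⊤) : sInf S ∈ S := by
  have hne : S.Nonempty := by
    rcases S.eq_empty_or_nonempty with h | h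
    · exact absurd (by simp [h]) h2
    · exact h
  set T : Set ℕ := {k | (k : ℝ≥0∞) ∈ S} with hT
  have hTne : T.Nonempty := by
    obtain ⟨x, hx⟩ := hne
    obtain ⟨k, rfl⟩ := h1 hx
    exact ⟨k, hx⟩
  have hmem : ((sInf T : ℕ) : ℝ≥0∞) ∈ S := Nat.sInf_mem hTne
  have heq : sInf S = ((sInf T : ℕ) : ℝ≥0∞) := by
    apply le_antisymm (sInf_le hmem)
    apply le_sInf
    intro b hb
    obtain ⟨k, rfl⟩ := h1 hb
    exact_mod_cast Nat.cast_le.mpr (Nat.sInf_le (show k ∈ T from hb))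
  rw [heq]; exact hmem

lemma dist_attained (G : WDigraph V)
    (hnat : ∀ l u' v', IsWalkFrom G u' v' l → ∃ k : ℕ, walkWeight G l = k)
    (u v : V) (hfin : G.dist u v ≠ ⊤) :
    ∃ l, IsWalkFrom G u v l ∧ walkWeight G l = G.dist u v := by
  rw [dist_eq_sInf] at hfin ⊢
  have h1 : walkWeight G '' {l | IsWalkFrom G u v l} ⊆ Set.range ((↑·) : ℕ → ℝ≥0∞) := by
    rintro x ⟨l, hl, rfl⟩
    obtain ⟨k, hk⟩ := hnat l u v hl
    exact ⟨k, hk.symm⟩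
  obtain ⟨l, hl, hw⟩ := sInf_mem_of_nat h1 hfin
  exact ⟨l, hl, hw⟩

lemma hopDist_attained (G : WDigraph V) (β : ℕ)
    (hnat : ∀ l u' v', IsWalkFrom G u' v' l → ∃ k : ℕ, walkWeight G l = k)
    (u v : V) (hfin : G.hopDist β u v ≠ ⊤) :
    ∃ l, IsWalkFrom G u v l ∧ l.length ≤ β ∧ walkWeight G l = G.hopDist β u v := by
  rw [hopDist_eq_sInf] at hfin ⊢
  have h1 : walkWeight G '' {l | IsWalkFrom G u v l ∧ l.length ≤ β} ⊆
      Set.range ((↑·) : ℕ → ℝ≥0∞) := by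
    rintro x ⟨l, hl, rfl⟩
    obtain ⟨k, hk⟩ := hnat l u v hl.1
    exact ⟨k, hk.symm⟩
  obtain ⟨l, hl, hw⟩ := sInf_mem_of_nat h1 hfin
  exact ⟨l, hl.1, hl.2, hw⟩

lemma dist_triangle (G : WDigraph V) (hw : G.Nonneg) (u w v : V) :
    G.dist u v ≤ G.dist u w + G.dist w v := by
  rcases eq_or_ne (G.dist u w) ⊤ with h1 | h1
  · simp [h1]
  rcases eq_or_ne (G.dist w v) ⊤ with h2 | h2
  · simp [h2]
  apply ENNReal.le_of_forall_pos_le_add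
  intro ε hε hfin
  have hεh : (0:ℝ≥0∞) < (ε:ℝ≥0∞)/2 := by
    simp [ENNReal.div_pos_iff]
    exact fun h => absurd h (by exact_mod_cast hε.ne')
  have h1' : G.dist u w < G.dist u w + ε/2 :=
    ENNReal.lt_add_right h1 hεh.ne'
  have h2' : G.dist w v < G.dist w v + ε/2 :=
    ENNReal.lt_add_right h2 hεh.ne'
  rw [dist_eq_sInf G u w] at h1'
  rw [dist_eq_sInf G w v] at h2'
  obtain ⟨x1, hx1mem, hx1⟩ := sInf_lt_iff.mp h1'
  obtain ⟨l1, hl1, rfl⟩ := hx1mem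
  obtain ⟨x2, hx2mem, hx2⟩ := sInf_lt_iff.mp h2'
  obtain ⟨l2, hl2, rfl⟩ := hx2mem
  rw [← dist_eq_sInf G u w] at hx1
  rw [← dist_eq_sInf G w v] at hx2
  calc G.dist u v ≤ walkWeight G (l1 ++ l2) := dist_le_walkWeight (isWalkFrom_append hl1 hl2)
    _ = walkWeight G l1 + walkWeight G l2 := walkWeight_append G hw l1 l2
    _ ≤ (G.dist u w + ε/2) + (G.dist w v + ε/2) := add_le_add hx1.le hx2.le
    _ = G.dist u w + G.dist w v + ε := by
        rw [add_add_add_comm, ENNReal.add_halves]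

lemma walk_lower {G G' : WDigraph V} (hw' : G'.Nonneg)
    (hEWB : ∀ e ∈ G'.edges, G.dist e.1 e.2 ≤ ENNReal.ofReal (G'.w e))
    (hw : G.Nonneg) :
    ∀ l u v, IsWalkFrom G' u v l → G.dist u v ≤ walkWeight G' l := by
  intro l
  induction l with
  | nil =>
    intro u v h; cases h
    simp [walkWeight_nil, dist_self]
  | cons e t ih =>
    intro u v h
    obtain ⟨he, h1, hrest⟩ := h
    rw [walkWeight_cons G' hw' e t]
    calc G.dist u v ≤ G.dist u e.2 + G.dist e.2 v := dist_triangle G hw u e.2 v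
      _ ≤ ENNReal.ofReal (G'.w e) + walkWeight G' t := by
          refine add_le_add ?_ (ih e.2 v hrest)
          rw [← h1]; exact hEWB e he

end Stmt16
namespace Stmt16
open Hopsets

/-- The big weight. -/
def Wt (h m : ℕ) : ℕ := h * m * m + 1

def lay {n : ℕ} (m : ℕ) (v : Fin n) : ℕ := v.val / m
def pos {n : ℕ} (m : ℕ) (v : Fin n) : ℕ := v.val % m

def vtx {n : ℕ} (hn : 0 < n) (m k p : ℕ) : Fin n := ⟨(k * m + p) % n, Nat.mod_lt _ hn⟩

def nweight {n : ℕ} (h m : ℕ) (e : Fin n × Fin n) : ℕ :=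
  Wt h m + ((pos m e.2 : ℤ) - (pos m e.1 : ℤ)).natAbs ^ 2

def edgeP {n : ℕ} (h m : ℕ) (e : Fin n × Fin n) : Prop :=
  e.1.val < (h+1) * m ∧ e.2.val < (h+1) * m ∧
    (lay m e.1 + 1 = lay m e.2 ∨ lay m e.2 + 1 = lay m e.1)

instance {n h m : ℕ} : DecidablePred (edgeP (n := n) h m) := fun e => by
  unfold edgeP; infer_instance

/-- The lower-bound graph. -/
def Gr (n h m : ℕ) : WDigraph (Fin n) :=
  ⟨Finset.univ.filter (edgeP h m), fun e => (nweight h m e : ℝ)⟩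

section Basic
variable {n : ℕ} {h m : ℕ}

lemma Gr_w (e : Fin n × Fin n) : (Gr n h m).w e = (nweight h m e : ℝ) := rfl

lemma Gr_nonneg : (Gr n h m).Nonneg := fun e => by
  rw [Gr_w]; positivity

lemma mem_Gr_edges {e : Fin n × Fin n} : e ∈ (Gr n h m).edges ↔ edgeP h m e := by
  simp [Gr]

lemma Gr_symm : (Gr n h m).Symmetric := by
  intro e he
  rw [mem_Gr_edges] at he
  constructor
  · rw [mem_Gr_edges]
    exact ⟨he.2.1, he.1, he.2.2.symm⟩
  · rw [Gr_w, Gr_w]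
    congr 1
    unfold nweight
    congr 1
    rw [← Int.natAbs_neg]
    congr 1
    ring

lemma vtx_val (hn : 0 < n) (hcore : (h+1) * m ≤ n) {k p : ℕ} (hk : k ≤ h) (hp : p < m) :
    (vtx hn m k p).val = k * m + p := by
  have : k * m + p < (h+1) * m := by
    calc k * m + p < k * m + m := by omega
      _ = (k+1) * m := by ring
      _ ≤ (h+1) * m := Nat.mul_le_mul_right m (by omega)
  exact Nat.mod_eq_of_lt (lt_of_lt_of_le this hcore)

lemma lay_vtx (hn : 0 < n) (hcore : (h+1) * m ≤ n) {k p : ℕ} (hk : k ≤ h) (hp : p < m) :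
    lay m (vtx hn m k p) = k := by
  rw [lay, vtx_val hn hcore hk hp, Nat.mul_comm, Nat.mul_add_div (by omega : 0 < m)]
  simp [Nat.div_eq_of_lt hp]

lemma pos_vtx (hn : 0 < n) (hcore : (h+1) * m ≤ n) {k p : ℕ} (hk : k ≤ h) (hp : p < m) :
    pos m (vtx hn m k p) = p := by
  rw [pos, vtx_val hn hcore hk hp, Nat.mul_comm, Nat.mul_add_mod]
  exact Nat.mod_eq_of_lt hp

lemma vtx_core (hn : 0 < n) (hcore : (h+1) * m ≤ n) {k p : ℕ} (hk : k ≤ h) (hp : p < m) :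
    (vtx hn m k p).val < (h+1) * m := by
  rw [vtx_val hn hcore hk hp]
  calc k * m + p < k * m + m := by omega
    _ = (k+1) * m := by ring
    _ ≤ (h+1) * m := Nat.mul_le_mul_right m (by omega)

lemma core_facts (hn : 0 < n) (hm : 0 < m) (hcore : (h+1) * m ≤ n) {v : Fin n} (hv : v.val < (h+1) * m) :
    v = vtx hn m (lay m v) (pos m v) ∧ lay m v ≤ h ∧ pos m v < m := by
  have h1 : pos m v < m := Nat.mod_lt _ hm
  have h2 : lay m v ≤ h := by
    have h2' : v.val / m < h + 1 := (Nat.div_lt_iff_lt_mul hm).mpr hv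
    unfold lay
    omega
  refine ⟨?_, h2, h1⟩
  have hval : v.val = lay m v * m + pos m v := by
    rw [lay, pos, Nat.mul_comm]
    exact (Nat.div_add_mod _ _).symm
  apply Fin.ext
  rw [vtx_val hn hcore h2 h1]
  exact hval

end Basic
end Stmt16
namespace Stmt16
open Hopsets

section Walks
variable {n : ℕ} {h m : ℕ}

lemma edge_lay {e : Fin n × Fin n} (he : e ∈ (Gr n h m).edges) :
    ((lay m e.2 : ℤ) - lay m e.1 = 1 ∨ (lay m e.2 : ℤ) - lay m e.1 = -1) := by
  rw [mem_Gr_edges] at he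
  rcases he.2.2 with h1 | h1
  · left; omega
  · right; omega

lemma walkWeight_Gr (l : List (Fin n × Fin n)) :
    walkWeight (Gr n h m) l = (((l.map (nweight h m)).sum : ℕ) : ℝ≥0∞) := by
  have : (l.map (Gr n h m).w).sum = (((l.map (nweight h m)).sum : ℕ) : ℝ) := by
    induction l with
    | nil => simp
    | cons e t ih =>
      simp only [List.map_cons, List.sum_cons, ih, Gr_w]
      push_cast
      ring
  rw [walkWeight, this, ENNReal.ofReal_natCast]

lemma Gr_walk_nat : ∀ (l : List (Fin n × Fin n)) u v, IsWalkFrom (Gr n h m) u v l →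
    ∃ k : ℕ, walkWeight (Gr n h m) l = (k : ℝ≥0∞) :=
  fun l _ _ _ => ⟨_, walkWeight_Gr l⟩

lemma cs_step (L d0 P' S' : ℤ) (hL : 0 ≤ L) (hS' : 0 ≤ S') (hCS : P' ^ 2 ≤ L * S') :
    (d0 + P') ^ 2 ≤ (L + 1) * (d0 ^ 2 + S') := by
  have h1 : 0 ≤ L * ((L + 1) * (d0 ^ 2 + S') - (d0 + P') ^ 2) := by
    nlinarith [sq_nonneg (L * d0 - P'), mul_le_mul_of_nonneg_left hCS hL, hCS]
  rcases hL.lt_or_eq with hL' | hL'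
  · have := (mul_nonneg_iff_of_pos_left hL').mp h1
    linarith
  · have hP : P' ^ 2 ≤ 0 := by rw [← hL'] at hCS; simpa using hCS
    have hP0 : P' = 0 := by nlinarith [sq_nonneg P']
    subst hP0
    rw [← hL']
    nlinarith [sq_nonneg d0]

/-- Main walk-analysis lemma for the base graph. -/
lemma walkG : ∀ (l : List (Fin n × Fin n)) (u v : Fin n),
    IsWalkFrom (Gr n h m) u v l → l ≠ [] →
    u.val < (h+1) * m ∧ v.val < (h+1) * m ∧
    ((lay m v : ℤ) - lay m u).natAbs ≤ l.length ∧
    ((l.length : ℤ)) ≡ ((lay m v : ℤ) - lay m u) [ZMOD 2] ∧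
    ∃ S : ℕ, (l.map (nweight h m)).sum = l.length * Wt h m + S ∧
      ((pos m v : ℤ) - pos m u) ^ 2 ≤ (l.length : ℤ) * (S : ℤ) := by
  intro l
  induction l with
  | nil => intro u v _ hne; exact absurd rfl hne
  | cons e t ih =>
    intro u v hw _
    obtain ⟨he, h1, hrest⟩ := hw
    have heP := mem_Gr_edges.mp he
    have hlay := edge_lay (e := e) he
    have hlay1 : ((lay m e.2 : ℤ) - lay m e.1) ≡ 1 [ZMOD 2] := by
      rcases hlay with h' | h' <;> rw [h'] <;> decide
    have hnwe : nweight h m e = Wt h m + ((pos m e.2 : ℤ) - (pos m e.1 : ℤ)).natAbs ^ 2 := rfl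
    have hd0sq : ((((pos m e.2 : ℤ) - (pos m e.1 : ℤ)).natAbs ^ 2 : ℕ) : ℤ)
        = ((pos m e.2 : ℤ) - (pos m e.1 : ℤ)) ^ 2 := by
      push_cast [Int.natAbs_pow]
      rw [sq_abs]
    rcases t with _ | ⟨f, t'⟩
    · -- single edge
      have h2 : e.2 = v := hrest
      subst h2; subst h1
      refine ⟨heP.1, heP.2.1, ?_, ?_, ((pos m e.2 : ℤ) - (pos m e.1 : ℤ)).natAbs ^ 2, ?_, ?_⟩
      · rcases hlay with h' | h' <;> simp [h']
      · simpa using hlay1.symm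
      · simp [hnwe]
      · simpa [hd0sq] using le_of_eq (by push_cast [Int.natAbs_pow, sq_abs]; ring)
    · obtain ⟨hcore2, hcorev, hlenI, hparI, S', hSI, hCSI⟩ :=
        ih e.2 v hrest (by simp)
      subst h1
      refine ⟨heP.1, hcorev, ?_, ?_,
        ((pos m e.2 : ℤ) - (pos m e.1 : ℤ)).natAbs ^ 2 + S', ?_, ?_⟩
      · -- length bound
        have htri : ((lay m v : ℤ) - lay m e.1).natAbs ≤
            ((lay m v : ℤ) - lay m e.2).natAbs + ((lay m e.2 : ℤ) - lay m e.1).natAbs := by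
          have hsplit : (lay m v : ℤ) - lay m e.1 =
              ((lay m v : ℤ) - lay m e.2) + ((lay m e.2 : ℤ) - lay m e.1) := by ring
          rw [hsplit]; exact Int.natAbs_add_le _ _
        have habs1 : ((lay m e.2 : ℤ) - lay m e.1).natAbs = 1 := by
          rcases hlay with h' | h' <;> rw [h'] <;> rfl
        simp only [List.length_cons] at hlenI ⊢
        omega
      · -- parity
        have hsplit : ((lay m v : ℤ) - lay m e.1) =
            ((lay m v : ℤ) - lay m e.2) + ((lay m e.2 : ℤ) - lay m e.1) := by ring
        rw [hsplit]
        have := hparI.add hlay1.symm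
        simp only [List.length_cons] at this ⊢
        push_cast at this ⊢
        exact this
      · -- weight equation
        simp only [List.map_cons, List.sum_cons] at hSI ⊢
        rw [hSI, hnwe]
        simp only [List.length_cons]
        ring
      · -- Cauchy–Schwarz step
        have hkey : ((pos m v : ℤ) - pos m e.1) =
            ((pos m e.2 : ℤ) - (pos m e.1 : ℤ)) + ((pos m v : ℤ) - pos m e.2) := by ring
        rw [hkey]
        have hstep := cs_step (((f :: t').length : ℤ))
          ((pos m e.2 : ℤ) - (pos m e.1 : ℤ)) ((pos m v : ℤ) - pos m e.2) (S' : ℤ)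
          (by positivity) (Int.natCast_nonneg _) hCSI
        simp only [List.length_cons] at hstep ⊢
        push_cast [Int.natAbs_pow] at hstep ⊢
        rw [sq_abs]
        exact hstep
  
end Walks
end Stmt16
namespace Stmt16
open Hopsets

section Paths
variable {n : ℕ} {h m : ℕ}

/-- The monotone path climbing `j` layers with horizontal step `d`. -/
def upPath {n : ℕ} (hn : 0 < n) (m : ℕ) (d : ℕ) : ℕ → ℕ → ℕ → List (Fin n × Fin n)
  | _, _, 0 => []
  | k, p, (j+1) => (vtx hn m k p, vtx hn m (k+1) (p+d)) :: upPath hn m d (k+1) (p+d) j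

lemma upPath_spec (hn : 0 < n) (hm : 0 < m) (hcore : (h+1) * m ≤ n) (d : ℕ) :
    ∀ (j k p : ℕ), k + j ≤ h → p + j * d < m →
    IsWalkFrom (Gr n h m) (vtx hn m k p) (vtx hn m (k+j) (p + j * d)) (upPath hn m d k p j) ∧
    (upPath hn m d k p j).length = j ∧
    ((upPath hn m d k p j).map (nweight h m)).sum = j * (Wt h m + d ^ 2) := by
  intro j
  induction j with
  | zero => intro k p _ _; exact ⟨by simp [upPath, IsWalkFrom], by simp [upPath], by simp [upPath]⟩
  | succ j ih =>
    intro k p hk hp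
    have hstep : p + d + j * d < m := by
      have : p + (j+1) * d = p + d + j * d := by ring
      omega
    have hkj : (k+1) + j ≤ h := by omega
    obtain ⟨hw, hlen, hsum⟩ := ih (k+1) (p+d) hkj hstep
    have hp1 : p < m := by nlinarith
    have hpd : p + d < m := by nlinarith
    have hkh : k ≤ h := by omega
    have hk1h : k + 1 ≤ h := by omega
    have hedge : (vtx hn m k p, vtx hn m (k+1) (p+d)) ∈ (Gr n h m).edges := by
      rw [mem_Gr_edges]
      refine ⟨vtx_core hn hcore hkh hp1, vtx_core hn hcore hk1h hpd, Or.inl ?_⟩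
      rw [lay_vtx hn hcore hkh hp1, lay_vtx hn hcore hk1h hpd]
    have hnw : nweight h m (vtx hn m k p, vtx hn m (k+1) (p+d)) = Wt h m + d ^ 2 := by
      unfold nweight
      rw [pos_vtx hn hcore hkh hp1, pos_vtx hn hcore hk1h hpd]
      congr 1
      have : ((p + d : ℕ) : ℤ) - (p : ℕ) = (d : ℤ) := by push_cast; ring
      rw [this]
      simp [Int.natAbs_natCast]
    refine ⟨?_, ?_, ?_⟩
    · refine ⟨hedge, rfl, ?_⟩
      have heq : k + (j+1) = (k+1) + j := by ring
      have heq2 : p + (j+1) * d = (p+d) + j * d := by ring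
      rw [heq, heq2]
      exact hw
    · simp [upPath, hlen]
    · simp only [upPath, List.map_cons, List.sum_cons, hsum, hnw]
      ring

/-- Distance formula along a line of slope `d`. -/
lemma dist_on_line (hn : 0 < n) (hm : 0 < m) (hcore : (h+1) * m ≤ n)
    (k j p d : ℕ) (hk : k + j ≤ h) (hp : p + j * d < m) :
    (Gr n h m).dist (vtx hn m k p) (vtx hn m (k+j) (p + j * d))
      = ((j * (Wt h m + d ^ 2) : ℕ) : ℝ≥0∞) := by
  obtain ⟨hw, hlen, hsum⟩ := upPath_spec hn hm hcore d j k p hk hp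
  apply le_antisymm
  · have := dist_le_walkWeight hw
    rw [walkWeight_Gr, hsum] at this
    exact this
  -- lower bound: every walk weighs at least this much
  rw [dist_eq_sInf]
  apply le_sInf
  rintro b ⟨l, hl, rfl⟩
  rw [walkWeight_Gr]
  rw [Nat.cast_le]
  rcases eq_or_ne l [] with rfl | hne
  · -- empty walk: endpoints equal, so j = 0
    have hveq : vtx hn m k p = vtx hn m (k+j) (p + j * d) := hl
    have hkh : k ≤ h := by omega
    have hpm : p < m := by nlinarith
    have hpm' : p + j * d < m := hp
    have h1 := congrArg Fin.val hveq
    rw [vtx_val hn hcore hkh hpm, vtx_val hn hcore (by omega) hpm'] at h1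
    have hj : j = 0 := by nlinarith
    subst hj
    simp
  · obtain ⟨hcu, hcv, hlen2, hpar, S, hS, hCS⟩ := walkG l _ _ hl hne
    have hkh : k ≤ h := by omega
    have hpm : p < m := by nlinarith
    simp only [lay_vtx hn hcore hkh hpm, lay_vtx hn hcore (show k + j ≤ h by omega) hp,
        pos_vtx hn hcore hkh hpm, pos_vtx hn hcore (show k + j ≤ h by omega) hp]
        at hlen2 hpar hCS
    rw [hS]
    have hdiff : ((k + j : ℕ) : ℤ) - (k : ℕ) = (j : ℤ) := by push_cast; ring
    rw [hdiff] at hlen2 hpar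
    have hjlen : j ≤ l.length := by
      simpa using hlen2
    rcases eq_or_lt_of_le hjlen with heq | hlt
    · -- length exactly j : use Cauchy–Schwarz
      have hpos : ((p + j * d : ℕ) : ℤ) - (p : ℕ) = (j : ℤ) * d := by push_cast; ring
      rw [hpos, ← heq] at hCS
      -- (j*d)^2 ≤ j * S  ⟹  j * d^2 ≤ S  (for j > 0), trivial for j = 0
      rcases Nat.eq_zero_or_pos j with hj0 | hjpos
      · subst hj0; simp
      · have hjS : (j : ℤ) * (j * d ^ 2) ≤ (j : ℤ) * S := by
          calc (j : ℤ) * (j * d ^ 2) = ((j : ℤ) * d) ^ 2 := by ring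
            _ ≤ (j : ℤ) * S := hCS
        have hdS : (j : ℤ) * d ^ 2 ≤ (S : ℤ) :=
          le_of_mul_le_mul_left hjS (by exact_mod_cast hjpos)
        rw [← heq]
        have : (j : ℤ) * d ^ 2 = ((j * d ^ 2 : ℕ) : ℤ) := by push_cast; ring
        rw [this] at hdS
        have hfin : j * d ^ 2 ≤ S := by exact_mod_cast hdS
        calc j * (Wt h m + d ^ 2) = j * Wt h m + j * d ^ 2 := by ring
          _ ≤ j * Wt h m + S := by omega
    · -- length > j : parity forces length ≥ j + 2, and Wt is huge
      have hl2 : j + 2 ≤ l.length := by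
        by_contra hcon
        have hlj1 : l.length = j + 1 := by omega
        rw [hlj1] at hpar
        have h' : ((j + 1 : ℕ) : ℤ) % 2 = ((j : ℕ) : ℤ) % 2 := hpar
        push_cast at h'
        omega
      -- j * d^2 ≤ Wt (crucial: d < m unless j = 0)
      have hdm : j * d ^ 2 < Wt h m := by
        rcases Nat.eq_zero_or_pos j with hj0 | hjpos
        · subst hj0; simp [Wt]
        · have hdlt : d < m := by
            have h1 : d ≤ j * d := Nat.le_mul_of_pos_left d hjpos
            have h2 : j * d < m := lt_of_le_of_lt (Nat.le_add_left _ _) hp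
            omega
          have h3 : d ^ 2 ≤ m * m := by
            have := Nat.mul_le_mul (Nat.le_of_lt hdlt) (Nat.le_of_lt hdlt)
            simpa [pow_two] using this
          have h4 : j * d ^ 2 ≤ h * (m * m) := Nat.mul_le_mul (by omega) h3
          have h5 : h * (m * m) < Wt h m := by
            unfold Wt; rw [Nat.mul_assoc]; omega
          omega
      calc j * (Wt h m + d ^ 2) = j * Wt h m + j * d ^ 2 := by ring
        _ ≤ j * Wt h m + Wt h m + Wt h m := by omega
        _ = (j + 2) * Wt h m := by ring
        _ ≤ l.length * Wt h m := Nat.mul_le_mul_right _ hl2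
        _ ≤ l.length * Wt h m + S := by omega

end Paths
end Stmt16
namespace Stmt16
open Hopsets

section Struct
variable {n : ℕ} {h m : ℕ}

set_option maxHeartbeats 2000000 in
lemma struct (hn : 0 < n) (hm : 0 < m) (hcore : (h+1) * m ≤ n) (hh : 1 ≤ h)
    (a d k : ℕ) (hk : k ≤ h) (had : a + h * d < m) (v' : Fin n)
    (heq : (Gr n h m).dist (vtx hn m k (a + k * d)) v'
         + (Gr n h m).dist v' (vtx hn m h (a + h * d))
       = (((h - k) * (Wt h m + d ^ 2) : ℕ) : ℝ≥0∞)) :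
    ∃ k', k ≤ k' ∧ k' ≤ h ∧ v' = vtx hn m k' (a + k' * d) := by
  have hkd : a + k * d < m := by
    have : k * d ≤ h * d := Nat.mul_le_mul_right d hk
    omega
  by_cases hv1 : v' = vtx hn m k (a + k * d)
  · exact ⟨k, le_refl k, hk, hv1⟩
  by_cases hv2 : v' = vtx hn m h (a + h * d)
  · exact ⟨h, hk, le_refl h, hv2⟩
  -- both distances are finite
  have hT : (Gr n h m).dist (vtx hn m k (a + k * d)) v' ≠ ⊤ := by
    intro hT; rw [hT] at heq; rw [top_add] at heq; exact ENNReal.natCast_ne_top _ heq.symm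
  have hU : (Gr n h m).dist v' (vtx hn m h (a + h * d)) ≠ ⊤ := by
    intro hU; rw [hU, add_top] at heq; exact ENNReal.natCast_ne_top _ heq.symm
  obtain ⟨l₁, hl₁, hw₁⟩ := dist_attained _ Gr_walk_nat _ _ hT
  obtain ⟨l₂, hl₂, hw₂⟩ := dist_attained _ Gr_walk_nat _ _ hU
  have hne₁ : l₁ ≠ [] := by
    intro hnil; subst hnil; exact hv1 (hl₁ : _ = v').symm
  have hne₂ : l₂ ≠ [] := by
    intro hnil; subst hnil; exact hv2 (hl₂ : v' = _)
  obtain ⟨hc₁u, hc₁v, hlen₁, hpar₁, S₁, hS₁, hCS₁⟩ := walkG l₁ _ _ hl₁ hne₁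
  obtain ⟨hc₂u, hc₂v, hlen₂, hpar₂, S₂, hS₂, hCS₂⟩ := walkG l₂ _ _ hl₂ hne₂
  -- coordinates of v'
  obtain ⟨hvtx', hκh, hqm⟩ := core_facts hn hm hcore hc₁v
  set κ := lay m v' with hκ
  set q := pos m v' with hq
  -- coordinates of the endpoints
  simp only [lay_vtx hn hcore hk hkd, pos_vtx hn hcore hk hkd,
    lay_vtx hn hcore (le_refl h) had, pos_vtx hn hcore (le_refl h) had]
    at hlen₁ hpar₁ hCS₁ hlen₂ hpar₂ hCS₂
  -- convert heq to a ℕ equation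
  rw [← hw₁, ← hw₂, walkWeight_Gr, walkWeight_Gr, hS₁, hS₂] at heq
  rw [← Nat.cast_add, Nat.cast_inj] at heq
  -- pass to ℤ
  have E : (l₁.length : ℤ) * Wt h m + S₁ + ((l₂.length : ℤ) * Wt h m + S₂)
      = ((h : ℤ) - k) * Wt h m + ((h : ℤ) - k) * d ^ 2 := by
    have := congrArg (fun x : ℕ => (x : ℤ)) heq
    push_cast [hk] at this
    linarith [this]
  have hWd : ((h : ℤ) - k) * d ^ 2 < Wt h m := by
    have hd2 : (h : ℤ) * d ^ 2 < Wt h m := by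
      rcases Nat.eq_zero_or_pos d with hd0 | hdpos
      · subst hd0; simp [Wt]; positivity
      · have hdm : d < m := by
          have h1 : d ≤ h * d := Nat.le_mul_of_pos_left d (by omega)
          omega
        have : h * d ^ 2 < Wt h m := by
          have h3 : d ^ 2 ≤ m * m := by
            have := Nat.mul_le_mul (Nat.le_of_lt hdm) (Nat.le_of_lt hdm)
            simpa [pow_two] using this
          have h4 : h * d ^ 2 ≤ h * (m * m) := Nat.mul_le_mul_left h h3
          have h5 : h * (m * m) < Wt h m := by unfold Wt; rw [Nat.mul_assoc]; omega
          omega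
        exact_mod_cast this
    have hk' : ((h : ℤ) - k) * d ^ 2 ≤ (h : ℤ) * d ^ 2 := by
      apply mul_le_mul_of_nonneg_right _ (by positivity)
      have : (k : ℤ) ≥ 0 := Int.natCast_nonneg k
      linarith
    linarith
  have hS₁0 : (0 : ℤ) ≤ S₁ := Int.natCast_nonneg _
  have hS₂0 : (0 : ℤ) ≤ S₂ := Int.natCast_nonneg _
  have hWt0 : (0 : ℤ) < Wt h m := by exact_mod_cast Nat.succ_pos _
  -- lengths
  have hℓ₁a : (κ : ℤ) - k ≤ l₁.length := by
    calc (κ : ℤ) - k ≤ |(κ : ℤ) - k| := le_abs_self _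
      _ = ((κ : ℤ) - k).natAbs := (Int.abs_eq_natAbs _)
      _ ≤ l₁.length := by exact_mod_cast hlen₁
  have hℓ₁b : (k : ℤ) - κ ≤ l₁.length := by
    calc (k : ℤ) - κ ≤ |(κ : ℤ) - k| := by rw [abs_sub_comm]; exact le_abs_self _
      _ = ((κ : ℤ) - k).natAbs := (Int.abs_eq_natAbs _)
      _ ≤ l₁.length := by exact_mod_cast hlen₁
  have hℓ₂a : (h : ℤ) - κ ≤ l₂.length := by
    calc (h : ℤ) - κ ≤ |(h : ℤ) - κ| := le_abs_self _
      _ = ((h : ℤ) - κ).natAbs := (Int.abs_eq_natAbs _)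
      _ ≤ l₂.length := by exact_mod_cast hlen₂
  -- total length is exactly h - k
  have hA1 : (l₁.length : ℤ) + l₂.length ≤ (h : ℤ) - k := by
    by_contra hcon
    push_neg at hcon
    have h1 : (h : ℤ) - k + 1 ≤ (l₁.length : ℤ) + l₂.length := by linarith
    have h2 : ((h : ℤ) - k + 1) * Wt h m ≤ ((l₁.length : ℤ) + l₂.length) * Wt h m :=
      mul_le_mul_of_nonneg_right h1 (le_of_lt hWt0)
    ring_nf at E h2
    linarith [hS₁0, hS₂0, hWd]
  -- k < h (since l₁ is nonempty)
  have hl₁pos : 1 ≤ (l₁.length : ℤ) := by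
    have := List.length_pos_iff.mpr hne₁
    exact_mod_cast this
  have hl₂0 : (0 : ℤ) ≤ l₂.length := Int.natCast_nonneg _
  have hκk : (k : ℤ) ≤ κ := by linarith
  have hkh : (k : ℤ) < h := by linarith
  have hA41 : (l₁.length : ℤ) = (κ : ℤ) - k := by linarith
  have hA42 : (l₂.length : ℤ) = (h : ℤ) - κ := by linarith
  -- S₁ + S₂ = (h-k) d²
  have hB : (S₁ : ℤ) + S₂ = ((h : ℤ) - k) * d ^ 2 := by
    have hE2 := E
    rw [hA41, hA42] at hE2
    linear_combination hE2
  -- Cauchy–Schwarz combination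
  rw [hA41] at hCS₁
  rw [hA42] at hCS₂
  set p : ℤ := ((a : ℤ) + k * d) with hp
  set b : ℤ := ((a : ℤ) + h * d) with hb
  have hCS₁' : ((q : ℤ) - p) ^ 2 ≤ ((κ : ℤ) - k) * S₁ := by
    rw [hp]; push_cast at hCS₁ ⊢; linarith [hCS₁]
  have hCS₂' : (b - q) ^ 2 ≤ ((h : ℤ) - κ) * S₂ := by
    rw [hb]; push_cast at hCS₂ ⊢; linarith [hCS₂]
  have hκh' : (κ : ℤ) ≤ h := by exact_mod_cast hκh
  have hkey : ((h : ℤ) - κ) * ((q : ℤ) - p) ^ 2 + ((κ : ℤ) - k) * (b - q) ^ 2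
      ≤ ((κ : ℤ) - k) * ((h : ℤ) - κ) * (S₁ + S₂) := by
    have h1 := mul_le_mul_of_nonneg_left hCS₁' (by linarith : (0:ℤ) ≤ (h : ℤ) - κ)
    have h2 := mul_le_mul_of_nonneg_left hCS₂' (by linarith : (0:ℤ) ≤ (κ : ℤ) - k)
    ring_nf at h1 h2 ⊢
    linarith [h1, h2]
  have hid : ((h : ℤ) - κ) * ((q : ℤ) - p) ^ 2 + ((κ : ℤ) - k) * (b - q) ^ 2
      = ((κ : ℤ) - k) * ((h : ℤ) - κ) * (((h : ℤ) - k) * d ^ 2)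
        + ((h : ℤ) - k) * ((q : ℤ) - a - κ * d) ^ 2 := by
    rw [hp, hb]; ring
  have hu : ((q : ℤ) - a - κ * d) ^ 2 ≤ 0 := by
    rw [hB] at hkey
    rw [hid] at hkey
    have h5 : ((h : ℤ) - k) * ((q : ℤ) - a - κ * d) ^ 2 ≤ 0 := by linarith
    have h6 : ((q : ℤ) - a - κ * d) ^ 2 ≤ ((h : ℤ) - k) * ((q : ℤ) - a - κ * d) ^ 2 := by
      have h7 := mul_le_mul_of_nonneg_right (by linarith : (1:ℤ) ≤ (h : ℤ) - k)
        (sq_nonneg ((q : ℤ) - a - κ * d))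
      linarith
    linarith
  have hu0 : (q : ℤ) = a + κ * d := by
    have h7 : ((q : ℤ) - a - κ * d) ^ 2 = 0 := le_antisymm hu (sq_nonneg _)
    have h8 : (q : ℤ) - a - κ * d = 0 := by
      exact pow_eq_zero_iff (two_ne_zero) |>.mp h7
    linarith
  have hqnat : q = a + κ * d := by exact_mod_cast hu0
  refine ⟨κ, by exact_mod_cast hκk, hκh, ?_⟩
  rw [hvtx', hqnat]

end Struct
end Stmt16
namespace Stmt16
open Hopsets

section Aug
variable {n : ℕ} {h m : ℕ} {H : Finset (Fin n × Fin n)}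

lemma aug_nonneg : ((Gr n h m).augment H).Nonneg := by
  intro e
  show (0:ℝ) ≤ if e ∈ H then _ else _
  split
  · exact ENNReal.toReal_nonneg
  · exact Gr_nonneg e

lemma aug_w (e : Fin n × Fin n) : ((Gr n h m).augment H).w e =
    if e ∈ H then ((Gr n h m).dist e.1 e.2).toReal else (nweight h m e : ℝ) := rfl

lemma mem_aug_edges {e : Fin n × Fin n} :
    e ∈ ((Gr n h m).augment H).edges ↔ e ∈ (Gr n h m).edges ∨ e ∈ H := by
  show e ∈ (Gr n h m).edges ∪ H ↔ _
  exact Finset.mem_union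

lemma Gr_dist_nat {u v : Fin n} (hfin : (Gr n h m).dist u v ≠ ⊤) :
    ∃ k : ℕ, (Gr n h m).dist u v = (k : ℝ≥0∞) := by
  obtain ⟨l, hl, hw⟩ := dist_attained _ Gr_walk_nat u v hfin
  obtain ⟨k, hk⟩ := Gr_walk_nat l u v hl
  exact ⟨k, by rw [← hw, hk]⟩

lemma EWB (Hfin : ∀ p ∈ H, (Gr n h m).dist p.1 p.2 ≠ ⊤) :
    ∀ e ∈ ((Gr n h m).augment H).edges,
      (Gr n h m).dist e.1 e.2 ≤ ENNReal.ofReal (((Gr n h m).augment H).w e) := by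
  intro e he
  rw [aug_w]
  by_cases heH : e ∈ H
  · rw [if_pos heH, ENNReal.ofReal_toReal (Hfin e heH)]
  · rw [if_neg heH]
    rcases mem_aug_edges.mp he with hG | hG
    · have hwalk : IsWalkFrom (Gr n h m) e.1 e.2 [e] := ⟨hG, rfl, rfl⟩
      have := dist_le_walkWeight hwalk
      rw [walkWeight_Gr] at this
      simpa using this
    · exact absurd hG heH
  
lemma aug_walk_nat (Hfin : ∀ p ∈ H, (Gr n h m).dist p.1 p.2 ≠ ⊤) :
    ∀ (l : List (Fin n × Fin n)) u v, IsWalkFrom ((Gr n h m).augment H) u v l →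
      ∃ k : ℕ, walkWeight ((Gr n h m).augment H) l = (k : ℝ≥0∞) := by
  intro l
  induction l with
  | nil => intro u v _; exact ⟨0, by simp [walkWeight_nil]⟩
  | cons e t ih =>
    intro u v hw
    obtain ⟨he, h1, hrest⟩ := hw
    obtain ⟨k2, hk2⟩ := ih e.2 v hrest
    rw [walkWeight_cons _ aug_nonneg, hk2]
    by_cases heH : e ∈ H
    · obtain ⟨k1, hk1⟩ := Gr_dist_nat (Hfin e heH)
      refine ⟨k1 + k2, ?_⟩
      rw [aug_w, if_pos heH, hk1, ENNReal.toReal_natCast, ENNReal.ofReal_natCast]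
      push_cast
      ring
    · refine ⟨nweight h m e + k2, ?_⟩
      rw [aug_w, if_neg heH, ENNReal.ofReal_natCast]
      push_cast
      ring

lemma line_bound {h k d a m : ℕ} (hk : k ≤ h) (had : a + h * d < m) :
    a + k * d + (h - k) * d = a + h * d ∧ k + (h - k) = h ∧ a + k * d + (h - k) * d < m := by
  have h1 : k * d + (h - k) * d = h * d := by
    rw [← Nat.add_mul, Nat.add_sub_cancel' hk]
  exact ⟨by omega, by omega, by omega⟩

/-- The key structural induction: an exact walk in the augmented graph from a
line vertex to the line's top either has many hops or uses a skipping hopset edge. -/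
lemma mainInd (hn : 0 < n) (hm : 0 < m) (hh : 1 ≤ h) (hcore : (h+1) * m ≤ n)
    (Hfin : ∀ p ∈ H, (Gr n h m).dist p.1 p.2 ≠ ⊤)
    (a d : ℕ) (had : a + h * d < m) :
    ∀ (l : List (Fin n × Fin n)) (k : ℕ), k ≤ h →
    IsWalkFrom ((Gr n h m).augment H) (vtx hn m k (a + k * d)) (vtx hn m h (a + h * d)) l →
    walkWeight ((Gr n h m).augment H) l ≤ (((h - k) * (Wt h m + d ^ 2) : ℕ) : ℝ≥0∞) →
    (h - k ≤ l.length) ∨ ∃ e ∈ l, e ∈ H ∧ ∃ i j : ℕ, i + 2 ≤ j ∧ j ≤ h ∧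
      e.1 = vtx hn m i (a + i * d) ∧ e.2 = vtx hn m j (a + j * d) := by
  intro l
  induction l with
  | nil =>
    intro k hk hwalk _
    left
    have hveq : vtx hn m k (a + k * d) = vtx hn m h (a + h * d) := hwalk
    have hkd : a + k * d < m := by
      have : k * d ≤ h * d := Nat.mul_le_mul_right d hk
      omega
    have := congrArg (lay m) hveq
    rw [lay_vtx hn hcore hk hkd, lay_vtx hn hcore (le_refl h) had] at this
    omega
  | cons e l' ih =>
    intro k hk hwalk hwt
    obtain ⟨he, h1, hrest⟩ := hwalk
    have hkd : a + k * d < m := by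
      have : k * d ≤ h * d := Nat.mul_le_mul_right d hk
      omega
    -- distance from current vertex to the top
    obtain ⟨e2', e1', e3'⟩ := line_bound hk had
    have hDV : (Gr n h m).dist (vtx hn m k (a + k * d)) (vtx hn m h (a + h * d))
        = (((h - k) * (Wt h m + d ^ 2) : ℕ) : ℝ≥0∞) := by
      have := dist_on_line hn hm hcore k (h - k) (a + k * d) d (by omega) e3'
      rw [e1', e2'] at this
      exact this
    have hx1y1 : (Gr n h m).dist e.1 e.2 ≤ ENNReal.ofReal (((Gr n h m).augment H).w e) :=
      EWB Hfin e he
    have hx2y2 : (Gr n h m).dist e.2 (vtx hn m h (a + h * d))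
        ≤ walkWeight ((Gr n h m).augment H) l' :=
      walk_lower aug_nonneg (EWB Hfin) Gr_nonneg l' _ _ hrest
    have hcons : walkWeight ((Gr n h m).augment H) (e :: l')
        = ENNReal.ofReal (((Gr n h m).augment H).w e)
          + walkWeight ((Gr n h m).augment H) l' :=
      walkWeight_cons _ aug_nonneg e l'
    have htri := dist_triangle (Gr n h m) Gr_nonneg
      (vtx hn m k (a + k * d)) e.2 (vtx hn m h (a + h * d))
    -- equality of the split distances
    have hsplit : (Gr n h m).dist e.1 e.2 + (Gr n h m).dist e.2 (vtx hn m h (a + h * d))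
        = (((h - k) * (Wt h m + d ^ 2) : ℕ) : ℝ≥0∞) := by
      apply le_antisymm
      · calc (Gr n h m).dist e.1 e.2 + (Gr n h m).dist e.2 (vtx hn m h (a + h * d))
            ≤ ENNReal.ofReal (((Gr n h m).augment H).w e)
              + walkWeight ((Gr n h m).augment H) l' := add_le_add hx1y1 hx2y2
          _ = walkWeight ((Gr n h m).augment H) (e :: l') := hcons.symm
          _ ≤ _ := hwt
      · rw [← hDV, h1]
        exact htri
    -- the next vertex is on the line
    have hstruct := struct hn hm hcore hh a d k hk had e.2 (by rw [h1] at hsplit; exact hsplit)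
    obtain ⟨k', hkk', hk'h, hv'⟩ := hstruct
    -- remaining walk is exact
    have hx1fin : (Gr n h m).dist e.1 e.2 ≠ ⊤ := by
      intro hcon
      rw [hcon, top_add] at hsplit
      exact ENNReal.natCast_ne_top _ hsplit.symm
    have hrest_wt : walkWeight ((Gr n h m).augment H) l'
        ≤ (((h - k') * (Wt h m + d ^ 2) : ℕ) : ℝ≥0∞) := by
      have hDV' : (Gr n h m).dist e.2 (vtx hn m h (a + h * d))
          = (((h - k') * (Wt h m + d ^ 2) : ℕ) : ℝ≥0∞) := by
        rw [hv']
        obtain ⟨f2, f1, f3⟩ := line_bound hk'h had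
        have := dist_on_line hn hm hcore k' (h - k') (a + k' * d) d (by omega) f3
        rw [f1, f2] at this
        exact this
      rw [← hDV']
      -- cancellation: x1 + y2 ≤ x1 + x2 with x1 finite
      have hchain : (Gr n h m).dist e.1 e.2 + walkWeight ((Gr n h m).augment H) l'
          ≤ (Gr n h m).dist e.1 e.2 + (Gr n h m).dist e.2 (vtx hn m h (a + h * d)) := by
        calc (Gr n h m).dist e.1 e.2 + walkWeight ((Gr n h m).augment H) l'
            ≤ ENNReal.ofReal (((Gr n h m).augment H).w e)
              + walkWeight ((Gr n h m).augment H) l' := add_le_add hx1y1 le_rfl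
          _ = walkWeight ((Gr n h m).augment H) (e :: l') := hcons.symm
          _ ≤ (((h - k) * (Wt h m + d ^ 2) : ℕ) : ℝ≥0∞) := hwt
          _ = _ := hsplit.symm
      exact (ENNReal.add_le_add_iff_left hx1fin).mp hchain
    rcases Nat.lt_or_ge k' (k + 2) with hsmall | hbig
    · -- small step: recurse
      rcases ih k' hk'h (by rw [← hv']; exact hrest) hrest_wt with hlen | hedge
      · left
        simp only [List.length_cons]
        omega
      · right
        obtain ⟨f, hf, hfH, spec⟩ := hedge
        exact ⟨f, List.mem_cons_of_mem e hf, hfH, spec⟩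
    · -- big step: e is a skipping hopset edge
      right
      have heH : e ∈ H := by
        rcases mem_aug_edges.mp he with hG | hG
        · exfalso
          have hlay := edge_lay (e := e) hG
          rw [h1, hv'] at hlay
          have hkd' : a + k' * d < m := by
            have : k' * d ≤ h * d := Nat.mul_le_mul_right d hk'h
            omega
          rw [lay_vtx hn hcore hk hkd, lay_vtx hn hcore hk'h hkd'] at hlay
          omega
        · exact hG
      exact ⟨e, List.mem_cons_self, heH, k, k', by omega, hk'h, by rw [h1], hv'⟩

end Aug
end Stmt16
namespace Stmt16
open Hopsets

section Count
variable {n : ℕ} {h m : ℕ}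

def Good {n : ℕ} (hn : 0 < n) (h m : ℕ) (H : Finset (Fin n × Fin n)) (a d : ℕ)
    (e : Fin n × Fin n) : Prop :=
  e ∈ H ∧ ∃ i j : ℕ, i + 2 ≤ j ∧ j ≤ h ∧
    e.1 = vtx hn m i (a + i * d) ∧ e.2 = vtx hn m j (a + j * d)

lemma main_count (hn : 0 < n) (hm : 0 < m) (hh : 1 ≤ h) (hcore : (h+1) * m ≤ n)
    (H : Finset (Fin n × Fin n)) (β : ℕ)
    (hexact : ∀ u v, ((Gr n h m).augment H).hopDist β u v = (Gr n h m).dist u v)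
    (hβ : β < h) (A D : ℕ)
    (hAD : ∀ a d : ℕ, a < A → d < D → a + h * d < m) :
    A * D ≤ H.card := by
  -- β ≥ 1
  have hβ1 : 1 ≤ β := by
    rcases Nat.eq_zero_or_pos β with hβ0 | h'
    · exfalso
      subst hβ0
      have huv : vtx hn m 0 0 ≠ vtx hn m 1 0 := by
        intro hcon
        have := congrArg Fin.val hcon
        rw [vtx_val hn hcore (Nat.zero_le h) hm, vtx_val hn hcore hh hm] at this
        omega
      have htop : ((Gr n h m).augment H).hopDist 0 (vtx hn m 0 0) (vtx hn m 1 0) = ⊤ := by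
        apply le_antisymm le_top
        apply le_iInf₂
        intro l hl
        exfalso
        obtain ⟨hw, hlen⟩ := hl
        have : l = [] := List.eq_nil_of_length_eq_zero (by omega)
        subst this
        exact huv hw
      have hedge : (vtx hn m 0 0, vtx hn m 1 0) ∈ (Gr n h m).edges := by
        rw [mem_Gr_edges]
        refine ⟨vtx_core hn hcore (Nat.zero_le h) hm, vtx_core hn hcore hh hm, Or.inl ?_⟩
        rw [lay_vtx hn hcore (Nat.zero_le h) hm, lay_vtx hn hcore hh hm]
      have hfin : (Gr n h m).dist (vtx hn m 0 0) (vtx hn m 1 0) ≠ ⊤ := by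
        have hwalk : IsWalkFrom (Gr n h m) (vtx hn m 0 0) (vtx hn m 1 0)
            [(vtx hn m 0 0, vtx hn m 1 0)] := ⟨hedge, rfl, rfl⟩
        have := dist_le_walkWeight hwalk
        rw [walkWeight_Gr] at this
        intro hcon
        rw [hcon] at this
        exact (ENNReal.natCast_ne_top _) (top_le_iff.mp this)
      exact hfin ((hexact _ _).symm.trans htop)
    · exact h'
  -- all H-edges have finite distance
  have Hfin : ∀ p ∈ H, (Gr n h m).dist p.1 p.2 ≠ ⊤ := by
    intro p hp hcon
    have hwalk : IsWalkFrom ((Gr n h m).augment H) p.1 p.2 [p] := by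
      refine ⟨?_, rfl, rfl⟩
      exact mem_aug_edges.mpr (Or.inr hp)
    have h0 : walkWeight ((Gr n h m).augment H) [p] = 0 := by
      rw [walkWeight_cons _ aug_nonneg, walkWeight_nil, aug_w, if_pos hp, hcon]
      simp
    have := hopDist_le_walkWeight hwalk (by simpa using hβ1)
    rw [h0, hexact, hcon] at this
    simp at this
  -- each line pair yields a good hopset edge
  have hex : ∀ a d : ℕ, a < A → d < D → ∃ e, Good hn h m H a d e := by
    intro a d ha hd
    have had : a + h * d < m := hAD a d ha hd
    obtain ⟨f2, f1, f3⟩ := line_bound (Nat.zero_le h) had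
    have hDV : (Gr n h m).dist (vtx hn m 0 (a + 0 * d)) (vtx hn m h (a + h * d))
        = (((h - 0) * (Wt h m + d ^ 2) : ℕ) : ℝ≥0∞) := by
      have := dist_on_line hn hm hcore 0 (h - 0) (a + 0 * d) d (by omega) (by
        simpa [Nat.zero_mul, Nat.zero_add] using f3)
      simp only [Nat.zero_add, Nat.sub_zero] at this ⊢
      rw [show a + 0 * d + h * d = a + h * d by omega] at this
      exact this
    have hfin : ((Gr n h m).augment H).hopDist β (vtx hn m 0 (a + 0 * d))
        (vtx hn m h (a + h * d)) ≠ ⊤ := by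
      rw [hexact, hDV]
      exact ENNReal.natCast_ne_top _
    obtain ⟨l, hlw, hlen, hweq⟩ := hopDist_attained _ β (aug_walk_nat Hfin) _ _ hfin
    have hwt : walkWeight ((Gr n h m).augment H) l
        ≤ (((h - 0) * (Wt h m + d ^ 2) : ℕ) : ℝ≥0∞) := by
      rw [hweq, hexact, hDV]
    rcases mainInd hn hm hh hcore Hfin a d had l 0 (Nat.zero_le h) hlw hwt with hlong | hedge
    · omega
    · obtain ⟨e, _, heH, i, j, hij, hjh, he1, he2⟩ := hedge
      exact ⟨e, heH, i, j, hij, hjh, he1, he2⟩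
  -- choice function and injectivity
  classical
  let f : ℕ × ℕ → Fin n × Fin n := fun p =>
    if hp : ∃ e, Good hn h m H p.1 p.2 e then hp.choose else (vtx hn m 0 0, vtx hn m 0 0)
  have hmaps : ∀ p ∈ Finset.range A ×ˢ Finset.range D, f p ∈ H := by
    intro p hp
    rw [Finset.mem_product, Finset.mem_range, Finset.mem_range] at hp
    have hgood := hex p.1 p.2 hp.1 hp.2
    simp only [f, dif_pos hgood]
    exact hgood.choose_spec.1
  have hinj : Set.InjOn f ((Finset.range A ×ˢ Finset.range D : Finset (ℕ × ℕ)) : Set (ℕ × ℕ)) := by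
    intro p₁ hp₁ p₂ hp₂ heq
    rw [Finset.mem_coe, Finset.mem_product, Finset.mem_range, Finset.mem_range] at hp₁ hp₂
    have hg₁ := hex p₁.1 p₁.2 hp₁.1 hp₁.2
    have hg₂ := hex p₂.1 p₂.2 hp₂.1 hp₂.2
    simp only [f, dif_pos hg₁, dif_pos hg₂] at heq
    obtain ⟨_, i₁, j₁, hij₁, hjh₁, he1₁, he2₁⟩ := hg₁.choose_spec
    obtain ⟨_, i₂, j₂, hij₂, hjh₂, he1₂, he2₂⟩ := hg₂.choose_spec
    rw [heq] at he1₁ he2₁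
    -- decode the vtx equalities
    have hpos : ∀ (a d i : ℕ), a < A → d < D → i ≤ h → a + i * d < m := by
      intro a d i ha hd hi
      have h1 : i * d ≤ h * d := Nat.mul_le_mul_right d hi
      have := hAD a d ha hd
      omega
    have d₁ := he1₁.symm.trans he1₂
    have d₂ := he2₁.symm.trans he2₂
    have hi₁h : i₁ ≤ h := by omega
    have hi₂h : i₂ ≤ h := by omega
    have hb₁ : p₁.1 + i₁ * p₁.2 < m := hpos _ _ _ hp₁.1 hp₁.2 hi₁h
    have hb₂ : p₂.1 + i₂ * p₂.2 < m := hpos _ _ _ hp₂.1 hp₂.2 hi₂h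
    have hb₃ : p₁.1 + j₁ * p₁.2 < m := hpos _ _ _ hp₁.1 hp₁.2 hjh₁
    have hb₄ : p₂.1 + j₂ * p₂.2 < m := hpos _ _ _ hp₂.1 hp₂.2 hjh₂
    have hlay₁ := congrArg (lay m) d₁
    rw [lay_vtx hn hcore hi₁h hb₁, lay_vtx hn hcore hi₂h hb₂] at hlay₁
    have hlay₂ := congrArg (lay m) d₂
    rw [lay_vtx hn hcore hjh₁ hb₃, lay_vtx hn hcore hjh₂ hb₄] at hlay₂
    subst hlay₁; subst hlay₂
    have hpos₁ := congrArg (pos m) d₁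
    rw [pos_vtx hn hcore hi₁h hb₁, pos_vtx hn hcore hi₁h hb₂] at hpos₁
    have hpos₂ := congrArg (pos m) d₂
    rw [pos_vtx hn hcore hjh₁ hb₃, pos_vtx hn hcore hjh₁ hb₄] at hpos₂
    have hz₁ : (p₁.1 : ℤ) + i₁ * p₁.2 = p₂.1 + i₁ * p₂.2 := by exact_mod_cast hpos₁
    have hz₂ : (p₁.1 : ℤ) + j₁ * p₁.2 = p₂.1 + j₁ * p₂.2 := by exact_mod_cast hpos₂
    have hsub : ((j₁ : ℤ) - i₁) * p₁.2 = ((j₁ : ℤ) - i₁) * p₂.2 := by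
      linear_combination hz₂ - hz₁
    have hji : ((j₁ : ℤ) - i₁) ≠ 0 := by
      have : (i₁ : ℤ) + 2 ≤ j₁ := by exact_mod_cast hij₁
      omega
    have hd : p₁.2 = p₂.2 := by
      have := mul_left_cancel₀ hji hsub
      exact_mod_cast this
    have ha : p₁.1 = p₂.1 := by
      rw [hd] at hpos₁
      omega
    exact Prod.ext ha hd
  have := Finset.card_le_card_of_injOn f hmaps hinj
  simpa using this

end Count
end Stmt16
namespace Stmt16
open Hopsets

set_option maxHeartbeats 1000000 in
lemma numeric (Cn h n m : ℕ) (hh : 1 ≤ h) (hm1 : (h+1) * m ≤ n) (hm2 : n < (h+1) * (m+1))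
    (hbig : 64 * (h+1)^3 * (Cn+1) ≤ n) :
    Cn * n + 1 ≤ (m / 2) * (m / (2*h)) ∧ 0 < m ∧
      (∀ a d : ℕ, a < m / 2 → d < m / (2*h) → a + h * d < m) := by
  have h2h : 0 < 2 * h := by omega
  have hD1 : 2 * h * (m / (2*h)) ≤ m := Nat.mul_div_le m (2*h)
  have hD2 : m < 2 * h * (m / (2*h)) + 2 * h := by
    have e1 := Nat.div_add_mod m (2*h)
    have e2 := Nat.mod_lt m h2h
    omega
  have hA1 : 2 * (m / 2) ≤ m := by omega
  have hA2 : m < 2 * (m / 2) + 2 := by omega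
  set A := m / 2 with hA
  set D := m / (2*h) with hD
  have hCn0 : (0:ℤ) ≤ (Cn:ℤ) := Int.natCast_nonneg _
  have hh1 : (1:ℤ) ≤ (h:ℤ) := by exact_mod_cast hh
  set X : ℤ := (h:ℤ) + 1 with hX
  have s0 : (2:ℤ) ≤ X := by omega
  have hXh : (h:ℤ) = X - 1 := by omega
  have f2 : (n:ℤ) < X * (m+1) := by rw [hX]; exact_mod_cast hm2
  have f7 : 64 * X^3 * ((Cn:ℤ)+1) ≤ n := by rw [hX]; exact_mod_cast hbig
  have f3 : 2 * (A:ℤ) ≤ m := by exact_mod_cast hA1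
  have f4 : (m:ℤ) < 2 * A + 2 := by exact_mod_cast hA2
  have f5 : 2 * (h:ℤ) * D ≤ m := by exact_mod_cast hD1
  have f6 : (m:ℤ) < 2 * h * D + 2 * h := by exact_mod_cast hD2
  set P : ℤ := X^2 * ((Cn:ℤ)+1) with hP
  have hPdef : P = X^2 * Cn + X^2 := by rw [hP]; ring
  have b1 : (0:ℤ) ≤ X^2 * Cn := mul_nonneg (sq_nonneg X) hCn0
  have b2 : (0:ℤ) ≤ X * Cn := mul_nonneg (by linarith) hCn0
  have hXX : X * X = X^2 := (sq X).symm
  have hX2 : 2 * X ≤ X^2 := by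
    have := mul_le_mul_of_nonneg_right s0 (show (0:ℤ) ≤ X by linarith)
    linarith [hXX]
  have hPX : X^2 ≤ P := by linarith [hPdef, b1]
  have hP1 : (1:ℤ) ≤ P := by linarith [hPX, hX2, s0]
  -- lower bound on m
  have a1 : (n:ℤ) < X * m + X := by
    have e : X * ((m:ℤ)+1) = X * m + X := by ring
    linarith [f2, e]
  have a2 : 64 * (X * P) = 64 * X^3 * ((Cn:ℤ)+1) := by rw [hP]; ring
  have a3 : X * (64 * P - 1) ≤ X * m := by
    have e8 : X * (64*P - 1) = 64 * (X * P) - X := by ring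
    linarith [a1, f7, a2, e8]
  have a4 : 64 * P - 1 ≤ m := le_of_mul_le_mul_left a3 (by linarith : (0:ℤ) < X)
  have hM1 : (1:ℤ) ≤ m := by linarith
  have hM2h : 2 * (h:ℤ) + 1 ≤ m := by linarith [a4, hPX, hX2]
  have hmpos : 0 < m := by exact_mod_cast (by linarith : (0:ℤ) < m)
  refine ⟨?_, hmpos, ?_⟩
  · have f4' : (m:ℤ) - 1 ≤ 2 * A := by linarith
    have f6' : (m:ℤ) - 2*h ≤ 2 * h * D := by linarith
    have u1 : ((m:ℤ) - 1) * (m - 2*h) ≤ (2*A) * (2*h*D) :=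
      mul_le_mul f4' f6' (by linarith) (by linarith)
    have e6 : (2*(A:ℤ)) * (2*h*D) = 4*h*(A*D) := by ring
    have u1' : ((m:ℤ) - 1) * (m - 2*h) ≤ 4 * h * (A * D) := by linarith [u1, e6]
    have hXm : X ≤ X * m := by
      have := mul_le_mul_of_nonneg_left hM1 (show (0:ℤ) ≤ X by linarith)
      simpa using this
    have hn2 : (n:ℤ) ≤ 2 * (X * m) := by linarith [a1, hXm]
    have w2 : (Cn:ℤ) * n ≤ 2 * Cn * (X * m) := by
      have h1 := mul_le_mul_of_nonneg_left hn2 hCn0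
      have e7 : (Cn:ℤ) * (2*(X*m)) = 2 * Cn * (X*m) := by ring
      linarith [h1, e7]
    have a4' : 64 * (X^2*(Cn:ℤ)) + 64 * X^2 - 1 ≤ m := by
      have e : 64 * P - 1 = 64 * (X^2*(Cn:ℤ)) + 64 * X^2 - 1 := by rw [hPdef]; ring
      linarith [a4, e]
    have w4 : 8 * (h:ℤ) * Cn * X + 6 * h + 1 ≤ m := by
      have e1 : 8*(h:ℤ)*Cn*X + 6*h + 1 = 8*(X^2*(Cn:ℤ)) - 8*(X*Cn) + 6*X - 5 := by
        rw [hXh]; ring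
      have goal' : 8*(X^2*(Cn:ℤ)) - 8*(X*Cn) + 6*X - 5 ≤ m := by
        linarith [a4', b1, b2, hX2, s0, sq_nonneg X]
      linarith [e1, goal']
    have e5 : ((m:ℤ)-1)*(m-2*h) = (m-2*h-1)*m + 2*h := by ring
    have w6 : 4 * (h:ℤ) * ((Cn:ℤ) * n + 1) ≤ (m - 2*h - 1) * m := by
      have v1 : 4 * (h:ℤ) * (Cn * n) ≤ 4 * h * (2 * Cn * (X * m)) :=
        mul_le_mul_of_nonneg_left w2 (by linarith)
      have v2 : (8 * (h:ℤ) * Cn * X + 4 * h) * m ≤ (m - 2*h - 1) * m := by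
        apply mul_le_mul_of_nonneg_right _ (by linarith)
        linarith [w4]
      have v4 : 4 * (h:ℤ) ≤ 4 * h * m := by
        have := mul_le_mul_of_nonneg_left hM1 (show (0:ℤ) ≤ 4*h by linarith)
        simpa using this
      have e2 : 4*(h:ℤ)*(2*Cn*(X*m)) = (8*h*Cn*X)*m := by ring
      have e3 : (8*(h:ℤ)*Cn*X + 4*h)*m = (8*h*Cn*X)*m + 4*h*m := by ring
      have e4 : 4*(h:ℤ)*((Cn:ℤ)*n + 1) = 4*h*(Cn*n) + 4*h := by ring
      linarith [v1, v2, v4, e2, e3, e4]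
    have final : 4 * (h:ℤ) * ((Cn:ℤ) * n + 1) ≤ 4 * h * (A * D) := by
      linarith [w6, u1', e5, hh1]
    have goal : (Cn:ℤ) * n + 1 ≤ A * D :=
      le_of_mul_le_mul_left (by linarith [final]) (by linarith : (0:ℤ) < 4 * h)
    exact_mod_cast goal
  · intro a d ha hd
    have hd' : h * d + h ≤ h * D := by
      have := Nat.mul_le_mul_left h (show d + 1 ≤ D by omega)
      rw [Nat.mul_add, Nat.mul_one] at this
      omega
    have hhD : 2 * (h * D) ≤ m := by
      have e : 2 * h * D = 2 * (h * D) := by ring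
      omega
    omega

end Stmt16

open Stmt16

open Hopsets in
/-- For every `δ > 0` and `C > 0`, for all large enough `n` there is an
`n`-vertex weighted undirected graph `G` such that every exact hopset `H` for `G`
(i.e. `dist^{(β)}_{G∪H} = dist_G`) with `|H| ≤ C·n` has hopbound `β ≥ n^{1/3−δ}`. -/
theorem stmt_16 (δ C : ℝ) (hδ : 0 < δ) (hC : 0 < C) :
    ∃ n0 : ℕ, ∀ n ≥ n0, ∃ G : WDigraph (Fin n), G.Symmetric ∧ G.Nonneg ∧
      ∀ (β : ℕ) (H : Finset (Fin n × Fin n)),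
        (∀ u v, (G.augment H).hopDist β u v = G.dist u v) →
        (H.card : ℝ) ≤ C * (n : ℝ) →
        (n : ℝ) ^ (1 / 3 - δ) ≤ (β : ℝ) := by
  classical
  set Cn : ℕ := ⌈C⌉₊ + 1 with hCn
  set B : ℕ := 8000 * (Cn + 1) with hB
  set q : ℕ := ⌈1 / (3 * δ)⌉₊ with hq
  refine ⟨B ^ q + B + 1, ?_⟩
  intro n hn
  have hn1 : 1 ≤ n := by
    have : 1 ≤ B ^ q + B + 1 := by omega
    omega
  have hnpos : 0 < n := hn1
  set x : ℝ := (n : ℝ) ^ ((1:ℝ) / 3 - δ) with hx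
  have hx0 : 0 ≤ x := Real.rpow_nonneg (by positivity) _
  set h : ℕ := ⌈x⌉₊ + 2 with hh
  have hh1 : 1 ≤ h := by omega
  have hxh : x ≤ (h : ℝ) := by
    have := Nat.le_ceil x
    have h2 : (⌈x⌉₊ : ℝ) ≤ (h : ℝ) := by
      rw [hh]; push_cast; linarith
    linarith
  have hh4 : ((h : ℝ) + 1) ≤ x + 4 := by
    have := Nat.ceil_lt_add_one hx0
    rw [hh]; push_cast; linarith
  have hn1R : (1:ℝ) ≤ (n:ℝ) := by exact_mod_cast hn1
  have hB1 : 1 ≤ B := by omega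
  -- the key size bound
  have hbig : 64 * (h+1)^3 * (Cn+1) ≤ n := by
    have hcast : ((64 * (h+1)^3 * (Cn+1) : ℕ) : ℝ) = 64 * ((h:ℝ)+1)^3 * ((Cn:ℝ)+1) := by
      push_cast; ring
    rw [← Nat.cast_le (α := ℝ), hcast]
    have hCn1 : (1:ℝ) ≤ (Cn:ℝ) + 1 := by
      have := Nat.cast_nonneg (α := ℝ) Cn
      linarith
    have hstep1 : 64 * ((h:ℝ)+1)^3 * ((Cn:ℝ)+1) ≤ 64 * (x+4)^3 * ((Cn:ℝ)+1) := by
      have h3 : ((h:ℝ)+1)^3 ≤ (x+4)^3 :=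
        pow_le_pow_left₀ (add_nonneg (Nat.cast_nonneg h) zero_le_one) hh4 3
      have h4 : (0:ℝ) ≤ (Cn:ℝ) + 1 := by positivity
      have := mul_le_mul_of_nonneg_right
        (mul_le_mul_of_nonneg_left h3 (show (0:ℝ) ≤ 64 by norm_num)) h4
      linarith
    rcases le_or_gt ((1:ℝ)/3 - δ) 0 with hε | hε
    · -- small exponent: x ≤ 1
      have hx1 : x ≤ 1 := Real.rpow_le_one_of_one_le_of_nonpos hn1R hε
      have h5 : (x+4)^3 ≤ 125 := by
        have h5a := pow_le_pow_left₀ (show (0:ℝ) ≤ x+4 by linarith)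
          (show x+4 ≤ 5 by linarith) 3
        norm_num at h5a
        linarith
      have hBn : (B : ℝ) ≤ n := by
        have : B ≤ n := by
          have := Nat.one_le_two_pow (n := q)
          calc B ≤ B ^ q + B + 1 := le_trans (Nat.le_add_left B (B ^ q)) (Nat.le_succ _)
            _ ≤ n := hn
        exact_mod_cast this
      calc 64 * ((h:ℝ)+1)^3 * ((Cn:ℝ)+1) ≤ 64 * 125 * ((Cn:ℝ)+1) := by
            have := mul_le_mul_of_nonneg_right
              (mul_le_mul_of_nonneg_left h5 (show (0:ℝ) ≤ 64 by norm_num))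
              (show (0:ℝ) ≤ (Cn:ℝ)+1 by positivity)
            linarith
        _ = (B : ℝ) := by rw [hB]; push_cast; ring
        _ ≤ n := hBn
    · -- large exponent: x ≥ 1 and B ≤ n^(3δ)
      have hx1 : (1:ℝ) ≤ x := by
        rw [hx]
        calc (1:ℝ) = (n:ℝ) ^ (0:ℝ) := by rw [Real.rpow_zero]
          _ ≤ (n:ℝ) ^ ((1:ℝ)/3 - δ) := Real.rpow_le_rpow_of_exponent_le hn1R (le_of_lt hε)
      have h5 : (x+4)^3 ≤ 125 * x^3 := by
        have h5a := pow_le_pow_left₀ (show (0:ℝ) ≤ x+4 by linarith)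
          (show x+4 ≤ 5*x by linarith) 3
        have e : (5*x)^3 = 125*x^3 := by ring
        linarith
      have hx3 : x^3 = (n:ℝ) ^ (3 * ((1:ℝ)/3 - δ)) := by
        rw [hx, ← Real.rpow_natCast ((n:ℝ) ^ ((1:ℝ)/3 - δ)) 3, ← Real.rpow_mul (by positivity)]
        norm_num
        ring_nf
      have hBq : ((B:ℝ)) ≤ (n:ℝ) ^ (3 * δ) := by
        have hnB : ((B ^ q : ℕ) : ℝ) ≤ (n : ℝ) := by exact_mod_cast le_trans (by omega) hn
        have hBR : (1:ℝ) ≤ (B:ℝ) := by exact_mod_cast hB1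
        have h6 : ((B:ℝ) ^ (q:ℝ)) ≤ (n:ℝ) := by
          rw [Real.rpow_natCast]
          exact_mod_cast hnB
        have h7 : ((B:ℝ) ^ (q:ℝ)) ^ (3*δ) ≤ (n:ℝ) ^ (3*δ) :=
          Real.rpow_le_rpow (by positivity) h6 (by positivity)
        have h8 : ((B:ℝ) ^ (q:ℝ)) ^ (3*δ) = (B:ℝ) ^ ((q:ℝ) * (3*δ)) := by
          rw [← Real.rpow_mul (by positivity)]
        have h9 : (1:ℝ) ≤ (q:ℝ) * (3*δ) := by
          have hq1 : 1 / (3*δ) ≤ (q:ℝ) := Nat.le_ceil _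
          have h3δ : (0:ℝ) < 3*δ := by linarith
          calc (1:ℝ) = (1/(3*δ)) * (3*δ) := by field_simp
            _ ≤ (q:ℝ) * (3*δ) := by
              apply mul_le_mul_of_nonneg_right hq1 (le_of_lt h3δ)
        have h10 : (B:ℝ) = (B:ℝ) ^ (1:ℝ) := by rw [Real.rpow_one]
        calc (B:ℝ) = (B:ℝ) ^ (1:ℝ) := h10
          _ ≤ (B:ℝ) ^ ((q:ℝ) * (3*δ)) := Real.rpow_le_rpow_of_exponent_le hBR h9
          _ = ((B:ℝ) ^ (q:ℝ)) ^ (3*δ) := h8.symm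
          _ ≤ (n:ℝ) ^ (3*δ) := h7
      have hsplit : (n:ℝ) = (n:ℝ) ^ (3 * ((1:ℝ)/3 - δ)) * (n:ℝ) ^ (3*δ) := by
        rw [← Real.rpow_add (by positivity : (0:ℝ) < (n:ℝ)),
          show 3 * ((1:ℝ)/3 - δ) + 3*δ = 1 by ring, Real.rpow_one]
      have hx3pos : (0:ℝ) ≤ (n:ℝ) ^ (3 * ((1:ℝ)/3 - δ)) := Real.rpow_nonneg (by positivity) _
      calc 64 * ((h:ℝ)+1)^3 * ((Cn:ℝ)+1)
          ≤ 64 * (125 * x^3) * ((Cn:ℝ)+1) := by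
            have := mul_le_mul_of_nonneg_right
              (mul_le_mul_of_nonneg_left h5 (show (0:ℝ) ≤ 64 by norm_num))
              (show (0:ℝ) ≤ (Cn:ℝ)+1 by positivity)
            linarith
        _ = (B:ℝ) * x^3 := by rw [hB]; push_cast; ring
        _ = (B:ℝ) * (n:ℝ) ^ (3 * ((1:ℝ)/3 - δ)) := by rw [hx3]
        _ ≤ (n:ℝ) ^ (3*δ) * (n:ℝ) ^ (3 * ((1:ℝ)/3 - δ)) :=
            mul_le_mul_of_nonneg_right hBq hx3pos
        _ = (n:ℝ) := by rw [mul_comm, ← hsplit]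
  -- instantiate the construction
  set m : ℕ := n / (h+1) with hm
  have hm1 : (h+1) * m ≤ n := by
    rw [hm, Nat.mul_comm]
    exact Nat.div_mul_le_self n (h+1)
  have hm2 : n < (h+1) * (m+1) := by
    have e1 : (h+1) * m + n % (h+1) = n := by rw [hm]; exact Nat.div_add_mod n (h+1)
    have e2 : n % (h+1) < h+1 := Nat.mod_lt n (by omega)
    calc n = (h+1)*m + n % (h+1) := e1.symm
      _ < (h+1)*m + (h+1) := Nat.add_lt_add_left e2 _
      _ = (h+1)*(m+1) := by ring
  obtain ⟨hcount, hmpos, hAD⟩ := numeric Cn h n m hh1 hm1 hm2 hbig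
  refine ⟨Gr n h m, Gr_symm, Gr_nonneg, ?_⟩
  intro β H hexact hcard
  -- it suffices that h ≤ β
  have hhβ : h ≤ β := by
    by_contra hβ
    push_neg at hβ
    have hADcard := main_count hnpos hmpos hh1 hm1 H β hexact hβ (m/2) (m/(2*h)) hAD
    have hcard2 : H.card ≤ Cn * n := by
      have hCCn : C ≤ (⌈C⌉₊ : ℝ) + 1 := by
        have := Nat.le_ceil C
        linarith
      have h1 : (H.card : ℝ) ≤ ((⌈C⌉₊ : ℝ) + 1) * n :=
        le_trans hcard (mul_le_mul_of_nonneg_right hCCn (Nat.cast_nonneg n))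
      have h2 : ((Cn * n : ℕ) : ℝ) = ((⌈C⌉₊ : ℝ) + 1) * n := by
        rw [hCn]; push_cast; ring
      have h3 : (H.card : ℝ) ≤ ((Cn * n : ℕ) : ℝ) := by rw [h2]; exact h1
      exact_mod_cast h3
    omega
  calc (n:ℝ) ^ ((1:ℝ)/3 - δ) = x := by rw [hx]
    _ ≤ (h : ℝ) := hxh
    _ ≤ (β : ℝ) := by exact_mod_cast hhβ
end
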